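/- arXiv:math/0512257 — 5 statements merged into one kernel-verified Lean document; each statement's English description precedes it below -/
import Mathlib

section
/- The map λ ↦ (charge(λ), λ[0], λ[1]) is a bijection from the set of all strict partitions onto ℤ × {strict partitions} × {partitions}. -/
noncomputable section

namespace Rect

/-- `l` is a partition: weakly decreasing list of positive integers -/
def IsPartition (l : List ℕ) : Prop := l.Pairwise (· ≥ ·) ∧ ∀ x ∈ l, 0 < x

/-- `l` is a strict partition: strictly decreasing list of positive integers -/
def IsStrictPartition (l : List ℕ) : Prop := l.Pairwise (· > ·) ∧ ∀ x ∈ l, 0 < x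

/-- the color of a node in column `j` (columns are 1-indexed) -/
def nodeColor (j : ℕ) : ℕ := if j % 4 = 0 ∨ j % 4 = 1 then 0 else 1

/-- `I_i^ℓ(λ)`: strict partitions `μ ⊇ λ` with `|μ| = |λ| + ℓ` all of whose nodes
outside `λ` have color `i` -/
def ISet (i ℓ : ℕ) (lam : List ℕ) : Set (List ℕ) :=
  {mu | IsStrictPartition mu ∧ (∀ j, lam.getD j 0 ≤ mu.getD j 0) ∧
    mu.sum = lam.sum + ℓ ∧
    ∀ j c, lam.getD j 0 < c → c ≤ mu.getD j 0 → nodeColor c = i}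

/-- the 4-bar core `c_m` -/
def cBar (m : ℤ) : List ℕ :=
  if 0 ≤ m then (List.range m.toNat).map fun i => 4 * (m.toNat - 1 - i) + 1
  else (List.range (-m).toNat).map fun i => 4 * ((-m).toNat - 1 - i) + 3

/-- `λ[0]`: the even parts of `λ`, halved -/
def bar0 (lam : List ℕ) : List ℕ := (lam.filter fun x => x % 2 == 0).map (· / 2)

/-- the charge of the Maya diagram of `λ` -/
def charge (lam : List ℕ) : ℤ :=
  ((lam.filter fun x => x % 4 == 1).length : ℤ) -
    ((lam.filter fun x => x % 4 == 3).length : ℤ)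

/-- membership in the Maya diagram
`M(λ) = {k ≥ 0 : 4k+1 ∈ λ} ∪ {k < 0 : -4k-1 ∉ λ}` -/
def mayaMem (lam : List ℕ) (k : ℤ) : Bool :=
  if 0 ≤ k then decide ((4 * k.toNat + 1) ∈ lam) else !(decide ((4 * (-k).toNat - 1) ∈ lam))

/-- the elements of the Maya diagram of `λ` in `[-B, B]`, `B = |λ|+1`, in
decreasing order; all elements `< -B` belong to `M(λ)` and all elements `> B`
do not, so this records all the information of `M(λ)`. -/
def mayaList (lam : List ℕ) : List ℤ :=
  ((List.range (2 * (lam.sum + 1) + 1)).map fun j => (lam.sum + 1 : ℤ) - j).filter (mayaMem lam)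

/-- `λ[1]`: writing the Maya diagram as a decreasing sequence `i_1 > i_2 > ⋯`,
this is the partition `(i_1 + 1 - c, i_2 + 2 - c, …)` where `c` is the charge -/
def bar1 (lam : List ℕ) : List ℕ :=
  (((mayaList lam).zipIdx.map Prod.swap).map fun p => (p.2 + (p.1 : ℤ) + 1 - charge lam).toNat).filter
    fun x => decide (0 < x)

/-- the number `g(λ)` of pairs of beads `(a, b)` on the 4-bar abacus with
`a ≡ 1 (mod 4)`, `b` even and `a > b`; a bead is put at `0` iff `M < 0` and `λ`
has exactly `-M` parts -/
def gnum (M : ℤ) (lam : List ℕ) : ℕ :=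
  let beads := if M < 0 ∧ lam.length = (-M).toNat then 0 :: lam else lam
  ((beads.filter fun a => a % 4 == 1).map fun a =>
    beads.countP fun b => decide (b % 2 = 0 ∧ b < a)).sum

/-- the sign `δ(λ) = (-1)^{g(λ)}` for `λ ∈ I_i^ℓ(c_M)` -/
def deltaSign (M : ℤ) (lam : List ℕ) : ℤ := (-1) ^ gnum M lam

/-- `ε_m`: 1 if `m` is odd, 0 if `m` is even -/
def epsN (m : ℕ) : ℕ := if m % 2 = 1 then 1 else 0


/-- two strictly decreasing lists with the same members are equal -/
lemma ext_sorted_gt {l₁ l₂ : List ℕ} (h₁ : l₁.Pairwise (· > ·)) (h₂ : l₂.Pairwise (· > ·))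
    (h : ∀ x, x ∈ l₁ ↔ x ∈ l₂) : l₁ = l₂ := by
  have : IsAntisymm ℕ (· > ·) := ⟨fun a b h1 h2 => absurd h1 (not_lt.mpr h2.le)⟩
  exact List.Perm.eq_of_pairwise (fun a b _ _ h1 h2 => absurd h1 (not_lt.mpr h2.le)) h₁ h₂
    ((List.perm_ext_iff_of_nodup h₁.nodup h₂.nodup).mpr h)

lemma mem_bar0 {l : List ℕ} (hl : ∀ x ∈ l, 0 < x) (x : ℕ) :
    x ∈ bar0 l ↔ 0 < x ∧ 2 * x ∈ l := by
  simp only [bar0, List.mem_map, List.mem_filter]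
  constructor
  · rintro ⟨y, ⟨hy, hy2⟩, rfl⟩
    have h2 : y % 2 = 0 := by simpa using hy2
    have h3 : 2 * (y / 2) = y := by omega
    exact ⟨by have := hl y hy; omega, by rwa [h3]⟩
  · rintro ⟨hx, h2x⟩
    exact ⟨2 * x, ⟨h2x, by simp [Nat.mul_mod_right]⟩, by omega⟩

lemma bar0_strict {l : List ℕ} (h : IsStrictPartition l) : IsStrictPartition (bar0 l) := by
  obtain ⟨hs, hp⟩ := h
  constructor
  · rw [bar0]
    refine List.pairwise_map.mpr ?_
    exact (hs.filter _).imp_of_mem (by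
      
      intro a b ha hb hab
      have ha2x : a % 2 = 0 := by simpa using (List.mem_filter.mp ha).2
      have hb2 : b % 2 = 0 := by simpa using (List.mem_filter.mp hb).2
      simp only [gt_iff_lt] at hab ⊢
      omega)
  · intro x hx
    exact ((mem_bar0 hp x).mp hx).1

/-- the beta numbers of a pair (charge, partition) -/
def beta (m : ℤ) (p : List ℕ) (j : ℕ) : ℤ := (p.getD j 0 : ℤ) + m - 1 - j

lemma getD_anti {p : List ℕ} (hp : p.Pairwise (· ≥ ·)) {i j : ℕ} (hij : i ≤ j) :
    p.getD j 0 ≤ p.getD i 0 := by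
  rcases lt_or_ge j p.length with hj | hj
  · have hi : i < p.length := lt_of_le_of_lt hij hj
    rw [List.getD_eq_getElem _ _ hj, List.getD_eq_getElem _ _ hi]
    rcases eq_or_lt_of_le hij with rfl | h
    · exact le_refl _
    · have := List.Pairwise.rel_get_of_lt hp (a := ⟨i, hi⟩) (b := ⟨j, hj⟩) (by simpa using h)
      simpa using this
  · rw [List.getD_eq_default _ _ hj]
    exact Nat.zero_le _

lemma getD_eq_zero {p : List ℕ} (hp : ∀ x ∈ p, 0 < x) {j : ℕ} (hj : p.length ≤ j) :
    p.getD j 0 = 0 := List.getD_eq_default _ _ hj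

lemma getD_pos {p : List ℕ} (hp : ∀ x ∈ p, 0 < x) {j : ℕ} (hj : j < p.length) :
    0 < p.getD j 0 := by
  rw [List.getD_eq_getElem _ _ hj]
  exact hp _ (List.getElem_mem hj)

lemma beta_strictAnti {p : List ℕ} (hp : p.Pairwise (· ≥ ·)) (m : ℤ) :
    StrictAnti (beta m p) := by
  apply strictAnti_nat_of_succ_lt
  intro n
  have := getD_anti hp (Nat.le_succ n)
  unfold beta
  have h2 : ((p.getD (n+1) 0 : ℕ) : ℤ) ≤ (p.getD n 0 : ℕ) := by exact_mod_cast this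
  push_cast
  omega

lemma beta_tail (m : ℤ) (p : List ℕ) {j : ℕ} (hj : p.length ≤ j) :
    beta m p j = m - 1 - j := by
  unfold beta
  rw [List.getD_eq_default _ _ hj]
  simp

/-- positive lists with the same getD are equal -/
lemma eq_of_getD {p q : List ℕ} (hp : ∀ x ∈ p, 0 < x) (hq : ∀ x ∈ q, 0 < x)
    (h : ∀ j, p.getD j 0 = q.getD j 0) : p = q := by
  induction p generalizing q with
  | nil =>
    cases q with
    | nil => rfl
    | cons b q' => exact absurd ((h 0).symm) (by simp; have := hq b (by simp); omega)
  | cons a p' ih =>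
    cases q with
    | nil => exact absurd (h 0) (by simp; have := hp a (by simp); omega)
    | cons b q' =>
      have h0 := h 0
      simp at h0
      subst h0
      congr 1
      exact ih (fun x hx => hp x (by simp [hx])) (fun x hx => hq x (by simp [hx]))
        (fun j => h (j + 1))

/-- strictly antitone maps ℕ → ℤ with the same range are equal -/
lemma strictAnti_range_eq {f g : ℕ → ℤ} (hf : StrictAnti f) (hg : StrictAnti g)
    (h : Set.range f = Set.range g) : f = g := by
  have key : ∀ n m, f n = g m → n = m := by
    intro n m hnm
    have h1 : f '' (Set.Iio n) = {y ∈ Set.range f | f n < y} := by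
      ext y
      constructor
      · rintro ⟨k, hk, rfl⟩; exact ⟨⟨k, rfl⟩, hf hk⟩
      · rintro ⟨⟨k, rfl⟩, hy⟩; exact ⟨k, hf.lt_iff_gt.mp hy, rfl⟩
    have h2 : g '' (Set.Iio m) = {y ∈ Set.range g | g m < y} := by
      ext y
      constructor
      · rintro ⟨k, hk, rfl⟩; exact ⟨⟨k, rfl⟩, hg hk⟩
      · rintro ⟨⟨k, rfl⟩, hy⟩; exact ⟨k, hg.lt_iff_gt.mp hy, rfl⟩
    have h3 : f '' (Set.Iio n) = g '' (Set.Iio m) := by rw [h1, h2, h, hnm]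
    have c1 : (f '' (Set.Iio n)).ncard = n := by
      rw [Set.ncard_image_of_injective _ hf.injective]
      rw [← Finset.coe_Iio, Set.ncard_coe_finset, Nat.card_Iio]
    have c2 : (g '' (Set.Iio m)).ncard = m := by
      rw [Set.ncard_image_of_injective _ hg.injective]
      rw [← Finset.coe_Iio, Set.ncard_coe_finset, Nat.card_Iio]
    rw [← c1, h3, c2]
  funext n
  obtain ⟨m, hm⟩ : f n ∈ Set.range g := h ▸ Set.mem_range_self n
  rw [← hm, key n m hm.symm]

/-- β determines the data -/
lemma beta_inj {m₁ m₂ : ℤ} {p₁ p₂ : List ℕ} (h₁ : ∀ x ∈ p₁, 0 < x) (h₂ : ∀ x ∈ p₂, 0 < x)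
    (h : beta m₁ p₁ = beta m₂ p₂) : m₁ = m₂ ∧ p₁ = p₂ := by
  have hm : m₁ = m₂ := by
    have := congrFun h (p₁.length + p₂.length)
    rw [beta_tail _ _ (by omega), beta_tail _ _ (by omega)] at this
    omega
  subst hm
  refine ⟨rfl, eq_of_getD h₁ h₂ fun j => ?_⟩
  have := congrFun h j
  unfold beta at this
  omega

lemma mem_le_sum {l : List ℕ} {x : ℕ} (hx : x ∈ l) : x ≤ l.sum := by
  induction l with
  | nil => simp at hx
  | cons a t ih =>
    rcases List.mem_cons.mp hx with rfl | h
    · simp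
    · have := ih h; simp; omega

lemma maya_low {l : List ℕ} {k : ℤ} (hk : k < -(l.sum + 1 : ℤ)) : mayaMem l k = true := by
  have hk0 : ¬ (0 ≤ k) := by omega
  rw [mayaMem, if_neg hk0]
  simp only [Bool.not_eq_true']
  rw [decide_eq_false_iff_not]
  intro hmem
  have h1 := mem_le_sum hmem
  have h2 : (l.sum + 1 : ℤ) < (-k).toNat := by omega
  omega

lemma maya_high {l : List ℕ} {k : ℤ} (hk : (l.sum + 1 : ℤ) < k) : mayaMem l k = false := by
  have hk0 : 0 ≤ k := by omega
  rw [mayaMem, if_pos hk0]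
  rw [decide_eq_false_iff_not]
  intro hmem
  have h1 := mem_le_sum hmem
  omega

lemma flatMap_pure' {α β : Type*} (f : α → β) (l : List α) :
    (l.flatMap fun a => [f a]) = l.map f := by
  induction l with
  | nil => rfl
  | cons a t ih => simp [List.flatMap_cons, ih]

lemma mayaList_eq (l : List ℕ) :
    mayaList l = ((List.range (2 * (l.sum + 1) + 1)).map
      fun j => ((l.sum : ℤ) + 1 - (j : ℕ))).filter (mayaMem l) := by
  rw [mayaList]
  congr 1
  show List.map _ ((List.range _).flatMap fun a => [((a:ℕ) : ℤ)]) = _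
  rw [flatMap_pure', List.map_map]
  rfl

lemma mem_mayaList {l : List ℕ} {k : ℤ} :
    k ∈ mayaList l ↔ (-(l.sum + 1 : ℤ) ≤ k ∧ k ≤ (l.sum + 1 : ℤ) ∧ mayaMem l k = true) := by
  rw [mayaList_eq]
  simp only [List.mem_filter, List.mem_map, List.mem_range]
  constructor
  · rintro ⟨⟨j, hj, rfl⟩, hmem⟩
    refine ⟨by omega, by omega, hmem⟩
  · rintro ⟨h1, h2, h3⟩
    refine ⟨⟨((l.sum + 1 : ℤ) - k).toNat, by omega, by omega⟩, h3⟩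

lemma mayaList_sorted (l : List ℕ) : (mayaList l).Pairwise (· > ·) := by
  rw [mayaList_eq]
  apply List.Pairwise.filter
  refine List.pairwise_map.mpr ?_
  exact (List.pairwise_lt_range).imp fun {a b} h => by
    simp only [gt_iff_lt]
    omega


lemma count_pos_part {l : List ℕ} (hnd : l.Nodup) (hpos : ∀ x ∈ l, 0 < x) :
    ((Finset.Icc (0 : ℤ) (l.sum + 1)).filter (fun k => mayaMem l k = true)).card
      = (l.filter fun x => x % 4 == 1).length := by
  rw [← List.toFinset_card_of_nodup (hnd.filter _)]
  apply Finset.card_bij (fun k _ => (4 * k.toNat + 1 : ℕ))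
  · intro k hk
    simp only [Finset.mem_filter, Finset.mem_Icc] at hk
    obtain ⟨⟨hk0, hkb⟩, hmem⟩ := hk
    rw [mayaMem, if_pos hk0] at hmem
    simp only [decide_eq_true_eq] at hmem
    simp only [List.mem_toFinset, List.mem_filter]
    exact ⟨hmem, by simp only [beq_iff_eq]; omega⟩
  · intro k hk k' hk' h
    simp only [Finset.mem_filter, Finset.mem_Icc] at hk hk'
    omega
  · intro x hx
    simp only [List.mem_toFinset, List.mem_filter, beq_iff_eq] at hx
    obtain ⟨hxl, hx4⟩ := hx
    refine ⟨((x - 1) / 4 : ℕ), ?_, ?_⟩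
    · have hxs := mem_le_sum hxl
      simp only [Finset.mem_filter, Finset.mem_Icc]
      refine ⟨⟨by positivity, by omega⟩, ?_⟩
      rw [mayaMem, if_pos (by positivity)]
      simp only [decide_eq_true_eq]
      have : 4 * ((x - 1) / 4 : ℕ) + 1 = x := by omega
      rw [Int.toNat_natCast, this]
      exact hxl
    · simp only [Int.toNat_natCast]
      omega

lemma count_neg_part {l : List ℕ} (hnd : l.Nodup) (hpos : ∀ x ∈ l, 0 < x) :
    ((Finset.Icc (-(l.sum + 1) : ℤ) (-1)).filter (fun k => ¬ mayaMem l k = true)).card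
      = (l.filter fun x => x % 4 == 3).length := by
  rw [← List.toFinset_card_of_nodup (hnd.filter _)]
  apply Finset.card_bij (fun k _ => (4 * (-k).toNat - 1 : ℕ))
  · intro k hk
    simp only [Finset.mem_filter, Finset.mem_Icc] at hk
    obtain ⟨⟨hk0, hkb⟩, hmem⟩ := hk
    rw [mayaMem, if_neg (by omega)] at hmem
    simp only [Bool.not_eq_true, Bool.not_eq_false', decide_eq_true_eq] at hmem
    simp only [List.mem_toFinset, List.mem_filter]
    refine ⟨hmem, by simp only [beq_iff_eq]; omega⟩
  · intro k hk k' hk'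
    simp only [Finset.mem_filter, Finset.mem_Icc] at hk hk'
    omega
  · intro x hx
    simp only [List.mem_toFinset, List.mem_filter, beq_iff_eq] at hx
    obtain ⟨hxl, hx4⟩ := hx
    have hxs := mem_le_sum hxl
    refine ⟨-(((x + 1) / 4 : ℕ) : ℤ), ?_, ?_⟩
    · simp only [Finset.mem_filter, Finset.mem_Icc]
      refine ⟨⟨by omega, by omega⟩, ?_⟩
      rw [mayaMem, if_neg (by omega)]
      simp only [Bool.not_eq_true, Bool.not_eq_false', decide_eq_true_eq, not_not]
      have h1 : ((-(-(((x + 1) / 4 : ℕ) : ℤ))).toNat) = (x + 1) / 4 := by omega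
      rw [h1]
      have : 4 * ((x + 1) / 4) - 1 = x := by omega
      rw [this]
      exact hxl
    · have h1 : ((-(-(((x + 1) / 4 : ℕ) : ℤ))).toNat) = (x + 1) / 4 := by omega
      rw [h1]
      omega

lemma mayaList_length {l : List ℕ} (hnd : l.Nodup) (hpos : ∀ x ∈ l, 0 < x) :
    ((mayaList l).length : ℤ) = (l.sum + 1) + charge l := by
  classical
  set b : ℤ := (l.sum + 1 : ℤ) with hb
  have hnd' : (mayaList l).Nodup := (mayaList_sorted l).nodup
  have h1 : (mayaList l).length = (mayaList l).toFinset.card :=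
    (List.toFinset_card_of_nodup hnd').symm
  have h2 : (mayaList l).toFinset
      = (Finset.Icc (-b) b).filter (fun k => mayaMem l k = true) := by
    ext k
    simp only [List.mem_toFinset, Finset.mem_filter, Finset.mem_Icc, mem_mayaList]
    tauto
  have hsplit : Finset.Icc (-b) b
      = Finset.Icc (-b) (-1) ∪ Finset.Icc 0 b := by
    ext k
    simp only [Finset.mem_union, Finset.mem_Icc]
    omega
  have hdisj : Disjoint ((Finset.Icc (-b) (-1)).filter (fun k => mayaMem l k = true))
      ((Finset.Icc (0:ℤ) b).filter (fun k => mayaMem l k = true)) := by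
    apply Finset.disjoint_filter_filter
    rw [Finset.disjoint_left]
    intro k hk hk'
    simp only [Finset.mem_Icc] at hk hk'
    omega
  have h3 : (mayaList l).toFinset.card
      = ((Finset.Icc (-b) (-1)).filter (fun k => mayaMem l k = true)).card
        + ((Finset.Icc (0:ℤ) b).filter (fun k => mayaMem l k = true)).card := by
    rw [h2, hsplit, Finset.filter_union, Finset.card_union_of_disjoint hdisj]
  have h4 := Finset.card_filter_add_card_filter_not
    (s := Finset.Icc (-b) (-1)) (p := fun k => mayaMem l k = true)
  have hcard : (((Finset.Icc (-b) (-1)).card : ℕ) : ℤ) = l.sum + 1 := by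
    rw [Int.card_Icc]
    omega
  have h5 := count_neg_part hnd hpos
  have h6 := count_pos_part hnd hpos
  rw [← hb] at h5 h6
  rw [h1, h3, charge]
  push_cast
  omega

lemma sorted_gt_get_le {w : List ℤ} (hw : w.Pairwise (· > ·)) {t u : ℕ} (ht : t ≤ u)
    (hu : u < w.length) :
    w[u]'hu + u ≤ w[t]'(lt_of_le_of_lt ht hu) + t := by
  induction u with
  | zero =>
    have : t = 0 := by omega
    subst this; rfl
  | succ v ih =>
    rcases Nat.eq_or_lt_of_le ht with rfl | hlt
    · rfl
    · have hv : v < w.length := by omega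
      have h1 := ih (by omega) hv
      have h2 : w[v + 1]'hu < w[v]'hv :=
        List.Pairwise.rel_get_of_lt hw (a := ⟨v, hv⟩) (b := ⟨v+1, hu⟩) (by simp)
      push_cast
      omega

/-- q-list: the pre-filter list in bar1 -/
def qList (l : List ℕ) : List ℕ :=
  ((mayaList l).zipIdx.map Prod.swap).map fun p => (p.2 + (p.1 : ℤ) + 1 - charge l).toNat

lemma bar1_eq_filter (l : List ℕ) : bar1 l = (qList l).filter fun x => decide (0 < x) := rfl

lemma qList_length (l : List ℕ) : (qList l).length = (mayaList l).length := by
  simp [qList]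

lemma qList_getElem (l : List ℕ) {t : ℕ} (ht : t < (mayaList l).length) :
    (qList l)[t]'(by rw [qList_length]; exact ht)
      = ((mayaList l)[t]'ht + (t : ℤ) + 1 - charge l).toNat := by
  simp [qList]

lemma mayaList_ge {l : List ℕ} (hnd : l.Nodup) (hpos : ∀ x ∈ l, 0 < x) {t : ℕ}
    (ht : t < (mayaList l).length) :
    charge l - 1 - t ≤ (mayaList l).getD t 0 := by
  have hlen := mayaList_length hnd hpos
  have hn : 0 < (mayaList l).length := by omega
  have hu : (mayaList l).length - 1 < (mayaList l).length := by omega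
  have hlast : -((l.sum : ℤ) + 1) ≤ (mayaList l).getD ((mayaList l).length - 1) 0 := by
    rw [List.getD_eq_getElem _ _ hu]
    exact (mem_mayaList.mp (List.getElem_mem _)).1
  have hkey : (mayaList l).getD ((mayaList l).length - 1) 0 + (((mayaList l).length - 1 : ℕ) : ℤ)
      ≤ (mayaList l).getD t 0 + t := by
    rw [List.getD_eq_getElem _ _ hu, List.getD_eq_getElem _ _ ht]
    exact sorted_gt_get_le (mayaList_sorted l) (by omega) hu
  omega

lemma qList_getD_int {l : List ℕ} (hnd : l.Nodup) (hpos : ∀ x ∈ l, 0 < x) {t : ℕ}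
    (ht : t < (mayaList l).length) :
    (((qList l).getD t 0 : ℕ) : ℤ) = (mayaList l).getD t 0 + (t : ℤ) + 1 - charge l := by
  have h0 := mayaList_ge hnd hpos ht
  rw [List.getD_eq_getElem _ _ ht] at h0
  rw [List.getD_eq_getElem _ _ (show t < (qList l).length by rw [qList_length]; exact ht),
    List.getD_eq_getElem _ _ ht, qList_getElem l ht]
  omega

lemma qList_sorted {l : List ℕ} : (qList l).Pairwise (· ≥ ·) := by
  rw [List.pairwise_iff_getElem]
  intro i j hi hj hij
  rw [qList_length] at hi hj
  rw [qList_getElem l hi, qList_getElem l hj]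
  have := sorted_gt_get_le (mayaList_sorted l) (le_of_lt hij) hj
  simp only [ge_iff_le]
  omega

lemma all_zero_filter {q : List ℕ} (h : ∀ x ∈ q, x = 0) :
    (q.filter fun x => decide (0 < x)) = [] := by
  induction q with
  | nil => rfl
  | cons a q' ih =>
    have ha := h a (by simp)
    subst ha
    rw [List.filter_cons_of_neg (by simp)]
    exact ih fun x hx => h x (by simp [hx])

lemma all_zero_getD {q : List ℕ} (h : ∀ x ∈ q, x = 0) (t : ℕ) : q.getD t 0 = 0 := by
  rcases lt_or_ge t q.length with ht | ht
  · rw [List.getD_eq_getElem _ _ ht]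
    exact h _ (List.getElem_mem ht)
  · exact List.getD_eq_default _ _ ht

lemma filter_pos_getD {q : List ℕ} (hq : q.Pairwise (· ≥ ·)) (t : ℕ) :
    (q.filter fun x => decide (0 < x)).getD t 0 = q.getD t 0 := by
  induction q generalizing t with
  | nil => rfl
  | cons a q' ih =>
    rcases Nat.eq_zero_or_pos a with rfl | ha
    · have hall : ∀ x ∈ (0 :: q' : List ℕ), x = 0 := by
        intro x hx
        rcases List.mem_cons.mp hx with rfl | hx'
        · rfl
        · have := List.rel_of_pairwise_cons hq hx'
          omega
      rw [all_zero_filter hall, all_zero_getD hall]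
      rfl
    · rw [List.filter_cons_of_pos (by simpa using ha)]
      cases t with
      | zero => rfl
      | succ t' =>
        rw [List.getD_cons_succ, List.getD_cons_succ]
        exact ih hq.of_cons t'

lemma bar1_partition {l : List ℕ} : IsPartition (bar1 l) := by
  rw [bar1_eq_filter]
  constructor
  · exact qList_sorted.filter _
  · intro x hx
    simpa using (List.mem_filter.mp hx).2


/-- the key structure lemma: beta of (charge, bar1) recovers the Maya list -/
lemma beta_charge_bar1 {l : List ℕ} (hnd : l.Nodup) (hpos : ∀ x ∈ l, 0 < x) (t : ℕ) :
    beta (charge l) (bar1 l) t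
      = if t < (mayaList l).length then (mayaList l).getD t 0 else charge l - 1 - t := by
  have hgetD : (bar1 l).getD t 0 = (qList l).getD t 0 := by
    rw [bar1_eq_filter]
    exact filter_pos_getD qList_sorted t
  rw [beta, hgetD]
  split
  · next ht =>
    have := qList_getD_int hnd hpos ht
    omega
  · next ht =>
    rw [List.getD_eq_default _ _ (by rw [qList_length]; omega)]
    simp

/-- recovery: the Maya diagram of `l` equals the range of beta of (charge, bar1) -/
lemma maya_eq_range_beta {l : List ℕ} (hl : IsStrictPartition l) (k : ℤ) :
    mayaMem l k = true ↔ ∃ t : ℕ, beta (charge l) (bar1 l) t = k := by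
  obtain ⟨hs, hpos⟩ := hl
  have hnd := hs.nodup
  have hlen := mayaList_length hnd hpos
  set b : ℤ := (l.sum : ℤ) + 1 with hb
  set n := (mayaList l).length with hn
  have hbeta := beta_charge_bar1 hnd hpos
  have hmemw : ∀ t, t < n → (mayaList l).getD t 0 ∈ mayaList l := by
    intro t ht
    rw [List.getD_eq_getElem _ _ ht]
    exact List.getElem_mem _
  rcases lt_trichotomy k (-b) with hk | hk
  · constructor
    · intro _
      refine ⟨(charge l - 1 - k).toNat, ?_⟩
      have htn : ((charge l - 1 - k).toNat : ℤ) = charge l - 1 - k := by omega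
      rw [hbeta, if_neg (by omega)]
      omega
    · intro _
      exact maya_low (by omega)
  · rcases le_or_gt k b with hk2 | hk2
    · have hk1 : -b ≤ k := by omega
      constructor
      · intro hmem
        have : k ∈ mayaList l := mem_mayaList.mpr ⟨by omega, by omega, hmem⟩
        obtain ⟨t, ht, hkt⟩ := List.getElem_of_mem this
        refine ⟨t, ?_⟩
        rw [hbeta, if_pos ht, List.getD_eq_getElem _ _ ht]
        exact hkt
      · rintro ⟨t, ht⟩
        rw [hbeta] at ht
        split at ht
        · next htn =>
          have := hmemw t htn
          rw [ht] at this
          exact (mem_mayaList.mp this).2.2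
        · next htn => omega
    · constructor
      · intro hmem
        have := maya_high (l := l) (k := k) (by omega)
        rw [hmem] at this
        exact absurd this (by simp)
      · rintro ⟨t, ht⟩
        rw [hbeta] at ht
        split at ht
        · next htn =>
          have := mem_mayaList.mp (hmemw t htn)
          omega
        · next htn => omega

/-- bounded test for membership in the range of beta -/
def betaHitB (m : ℤ) (p : List ℕ) (v : ℤ) : Bool :=
  decide (∃ j < p.length + (m - v).toNat + 1, beta m p j = v)

lemma betaHitB_iff {m : ℤ} {p : List ℕ} {v : ℤ} :
    betaHitB m p v = true ↔ ∃ j, beta m p j = v := by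
  rw [betaHitB, decide_eq_true_eq]
  constructor
  · rintro ⟨j, _, hj⟩; exact ⟨j, hj⟩
  · rintro ⟨j, hj⟩
    refine ⟨j, ?_, hj⟩
    rcases lt_or_ge j p.length with h | h
    · omega
    · rw [beta_tail _ _ h] at hj
      omega

def buildPred (m : ℤ) (s p : List ℕ) (n : ℕ) : Prop :=
  0 < n ∧ ((n % 2 = 0 ∧ n / 2 ∈ s) ∨
    (n % 4 = 1 ∧ betaHitB m p ((n / 4 : ℕ) : ℤ) = true) ∨
    (n % 4 = 3 ∧ betaHitB m p (-(((n + 1) / 4 : ℕ) : ℤ)) = false))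

instance (m : ℤ) (s p : List ℕ) : DecidablePred (buildPred m s p) := fun n => by
  unfold buildPred; infer_instance

lemma mem_le_foldr_max {p : List ℕ} {x : ℕ} (hx : x ∈ p) : x ≤ p.foldr max 0 := by
  induction p with
  | nil => simp at hx
  | cons a t ih =>
    rcases List.mem_cons.mp hx with rfl | h
    · simp [le_max_iff]
    · simp [le_max_iff]
      right
      exact ih h

lemma getD_le_foldr_max (p : List ℕ) (j : ℕ) : p.getD j 0 ≤ p.foldr max 0 := by
  rcases lt_or_ge j p.length with h | h
  · rw [List.getD_eq_getElem _ _ h]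
    exact mem_le_foldr_max (List.getElem_mem h)
  · rw [List.getD_eq_default _ _ h]
    exact Nat.zero_le _

def buildN (m : ℤ) (s p : List ℕ) : ℕ :=
  4 * (p.foldr max 0 + p.length + m.natAbs + s.foldr max 0) + 8

lemma buildPred_lt {m : ℤ} {s p : List ℕ} {n : ℕ} (h : buildPred m s p n) :
    n < buildN m s p := by
  obtain ⟨hn, h⟩ := h
  rw [buildN]
  rcases h with ⟨he, hs⟩ | ⟨h4, hb⟩ | ⟨h4, hb⟩
  · have := mem_le_foldr_max hs
    omega
  · obtain ⟨j, hj⟩ := betaHitB_iff.mp hb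
    rw [beta] at hj
    have h1 := getD_le_foldr_max p j
    omega
  · by_contra hcon
    push_neg at hcon
    have hk : p.length + m.natAbs + 1 ≤ (n + 1) / 4 := by omega
    have : betaHitB m p (-(((n + 1) / 4 : ℕ) : ℤ)) = true := by
      rw [betaHitB_iff]
      refine ⟨(m - 1 + ((n + 1) / 4 : ℕ)).toNat, ?_⟩
      rw [beta_tail _ _ (by omega)]
      omega
    rw [this] at hb
    simp at hb

/-- the inverse construction -/
def build (m : ℤ) (s p : List ℕ) : List ℕ :=
  ((Finset.range (buildN m s p)).filter (buildPred m s p)).sort (· ≥ ·)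

lemma mem_build {m : ℤ} {s p : List ℕ} {n : ℕ} :
    n ∈ build m s p ↔ buildPred m s p n := by
  rw [build, Finset.mem_sort, Finset.mem_filter, Finset.mem_range]
  exact ⟨fun h => h.2, fun h => ⟨buildPred_lt h, h⟩⟩

lemma build_strict {m : ℤ} {s p : List ℕ} : IsStrictPartition (build m s p) := by
  constructor
  · exact (Finset.sortedGT_sort _).pairwise
  · intro x hx
    exact (mem_build.mp hx).1

lemma betaHitB_false_iff {m : ℤ} {p : List ℕ} {v : ℤ} :
    betaHitB m p v = false ↔ ¬ ∃ j, beta m p j = v := by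
  rw [← betaHitB_iff, Bool.not_eq_true]

lemma maya_build {m : ℤ} {s p : List ℕ} (k : ℤ) :
    mayaMem (build m s p) k = true ↔ ∃ j, beta m p j = k := by
  rcases le_or_gt 0 k with hk | hk
  · rw [mayaMem, if_pos hk, decide_eq_true_eq, mem_build, buildPred]
    have h4 : (4 * k.toNat + 1) % 4 = 1 := by omega
    have hd : (((4 * k.toNat + 1) / 4 : ℕ) : ℤ) = k := by omega
    constructor
    · rintro ⟨-, h⟩
      rcases h with ⟨he, -⟩ | ⟨-, hb⟩ | ⟨h3, -⟩
      · omega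
      · rw [hd] at hb
        exact betaHitB_iff.mp hb
      · omega
    · intro hb
      refine ⟨by omega, Or.inr (Or.inl ⟨h4, ?_⟩)⟩
      rw [hd]
      exact betaHitB_iff.mpr hb
  · rw [mayaMem, if_neg (by omega)]
    have ha : 1 ≤ (-k).toNat := by omega
    have h4 : (4 * (-k).toNat - 1) % 4 = 3 := by omega
    have hval : (-(((4 * (-k).toNat - 1 + 1) / 4 : ℕ) : ℤ)) = k := by omega
    rw [Bool.not_eq_true', decide_eq_false_iff_not, mem_build, buildPred]
    constructor
    · intro hcon
      by_contra hb
      exact hcon ⟨by omega, Or.inr (Or.inr ⟨h4, by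
        rw [hval]; exact betaHitB_false_iff.mpr hb⟩)⟩
    · rintro hex hcon
      rcases hcon.2 with ⟨he, -⟩ | ⟨h1', -⟩ | ⟨-, hb'⟩
      · omega
      · omega
      · rw [hval] at hb'
        rw [betaHitB_false_iff] at hb'
        exact hb' hex

lemma build_charge_bar1 {m : ℤ} {s p : List ℕ} (hp : IsPartition p) :
    charge (build m s p) = m ∧ bar1 (build m s p) = p := by
  set l := build m s p with hl
  have hstrict : IsStrictPartition l := build_strict
  have hrange : Set.range (beta (charge l) (bar1 l)) = Set.range (beta m p) := by
    ext k
    simp only [Set.mem_range]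
    rw [← maya_eq_range_beta hstrict k, maya_build k]
  have hfeq : beta (charge l) (bar1 l) = beta m p :=
    strictAnti_range_eq (beta_strictAnti bar1_partition.1 _) (beta_strictAnti hp.1 _) hrange
  exact beta_inj bar1_partition.2 hp.2 hfeq

lemma mem_iff_buildPred {m : ℤ} {s p l : List ℕ} (hl : IsStrictPartition l)
    (hc : charge l = m) (h0 : bar0 l = s) (h1 : bar1 l = p) (n : ℕ) :
    n ∈ l ↔ buildPred m s p n := by
  have hK : ∀ k : ℤ, mayaMem l k = true ↔ ∃ t, beta m p t = k := by
    intro k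
    rw [← hc, ← h1]
    exact maya_eq_range_beta hl k
  have hpos := hl.2
  rcases Nat.even_or_odd n with he | ho
  · -- even case
    have he2 : n % 2 = 0 := Nat.even_iff.mp he
    constructor
    · intro hn
      have hn0 := hpos n hn
      refine ⟨hn0, Or.inl ⟨he2, ?_⟩⟩
      rw [← h0, mem_bar0 hpos, show 2 * (n / 2) = n by omega]
      exact ⟨by omega, hn⟩
    · rintro ⟨hn0, hh⟩
      rcases hh with ⟨-, hs⟩ | ⟨h1', -⟩ | ⟨h3', -⟩
      · rw [← h0, mem_bar0 hpos, show 2 * (n / 2) = n by omega] at hs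
        exact hs.2
      · omega
      · omega
  · rcases Nat.odd_mod_four_iff.mp (Nat.odd_iff.mp ho) with h1' | h3'
    · -- n % 4 = 1
      have hk := hK ((n / 4 : ℕ) : ℤ)
      rw [mayaMem, if_pos (by positivity), decide_eq_true_eq, Int.toNat_natCast,
        show 4 * (n / 4) + 1 = n by omega] at hk
      constructor
      · intro hn
        exact ⟨by omega, Or.inr (Or.inl ⟨h1', betaHitB_iff.mpr (hk.mp hn)⟩)⟩
      · rintro ⟨hn0, hh⟩
        rcases hh with ⟨he2, -⟩ | ⟨-, hb⟩ | ⟨h3', -⟩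
        · omega
        · exact hk.mpr (betaHitB_iff.mp hb)
        · omega
    · -- n % 4 = 3
      have hq1 : 1 ≤ (n + 1) / 4 := by omega
      have hk := hK (-(((n + 1) / 4 : ℕ) : ℤ))
      rw [mayaMem, if_neg (by omega)] at hk
      rw [show ((-(-((((n + 1) / 4 : ℕ) : ℤ)))).toNat) = (n + 1) / 4 by omega,
        show 4 * ((n + 1) / 4) - 1 = n by omega] at hk
      rw [Bool.not_eq_true', decide_eq_false_iff_not] at hk
      constructor
      · intro hn
        refine ⟨by omega, Or.inr (Or.inr ⟨h3', ?_⟩)⟩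
        rw [betaHitB_false_iff]
        intro hex
        exact (hk.mpr hex) hn
      · rintro ⟨hn0, hh⟩
        rcases hh with ⟨he2, -⟩ | ⟨h1', -⟩ | ⟨-, hb⟩
        · omega
        · omega
        · rw [betaHitB_false_iff] at hb
          by_contra hn
          exact hb (hk.mp hn)

lemma bar0_build {m : ℤ} {s p : List ℕ} (hs : IsStrictPartition s) :
    bar0 (build m s p) = s := by
  apply ext_sorted_gt (bar0_strict build_strict).1 hs.1
  intro x
  rw [mem_bar0 build_strict.2, mem_build, buildPred]
  constructor
  · rintro ⟨hx, -, hh⟩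
    rcases hh with ⟨-, hmem⟩ | ⟨h1', -⟩ | ⟨h3', -⟩
    · rwa [show 2 * x / 2 = x by omega] at hmem
    · omega
    · omega
  · intro hx
    have hx0 := hs.2 x hx
    refine ⟨by omega, by omega, Or.inl ⟨by omega, ?_⟩⟩
    rwa [show 2 * x / 2 = x by omega]


/-- The map `λ ↦ (charge λ, λ[0], λ[1])` is a bijection from the set of strict
partitions onto `ℤ × {strict partitions} × {partitions}`:  it maps strict
partitions into the target set, and every `(m, s, p)` in the target has a unique
preimage. -/
theorem barQuotient_bijective :
    (∀ l : List ℕ, IsStrictPartition l → IsStrictPartition (bar0 l) ∧ IsPartition (bar1 l)) ∧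
    (∀ (m : ℤ) (s p : List ℕ), IsStrictPartition s → IsPartition p →
      ∃! l : List ℕ, IsStrictPartition l ∧ charge l = m ∧ bar0 l = s ∧ bar1 l = p) := by
  constructor
  · intro l hl
    exact ⟨bar0_strict hl, bar1_partition⟩
  · intro m s p hs hp
    obtain ⟨hc, h1⟩ := build_charge_bar1 (m := m) (s := s) (p := p) hp
    refine ⟨build m s p, ⟨build_strict, hc, bar0_build hs, h1⟩, ?_⟩
    rintro l' ⟨hl', hc', h0', h1'⟩
    apply ext_sorted_gt hl'.1 build_strict.1
    intro n
    rw [mem_iff_buildPred hl' hc' h0' h1', mem_build]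

end Rect
end
end

section
/- For every integer m > 0: I_1^ℓ(c_m) = ∅ for all integers ℓ > 2m, and I_0^ℓ(c_{−m}) = ∅ for all integers ℓ > 2m+1. -/
noncomputable section

namespace Rect

lemma sum_eq_sum_getD (l : List ℕ) : ∀ n, l.length ≤ n →
    l.sum = ∑ j ∈ Finset.range n, l.getD j 0 := by
  induction l with
  | nil => intro n _; simp
  | cons a l ih =>
    intro n hn
    match n with
    | n + 1 =>
      rw [Finset.sum_range_succ']
      simp only [List.getD_cons_succ, List.getD_cons_zero, List.sum_cons]
      rw [← ih n (by simpa using hn)]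
      omega

lemma getD_map_range (n j : ℕ) (f : ℕ → ℕ) :
    ((List.range n).map f).getD j 0 = if j < n then f j else 0 := by
  split
  · rw [List.getD_eq_getElem _ _ (by simpa)]
    simp
  · exact List.getD_eq_default _ _ (by simp; omega)

/-- For every integer `m > 0`:  `I_1^ℓ(c_m) = ∅` for all `ℓ > 2m`, and
`I_0^ℓ(c_{-m}) = ∅` for all `ℓ > 2m+1`. -/
theorem ISet_eq_empty (m : ℕ) (hm : 0 < m) :
    (∀ ℓ : ℕ, 2 * m < ℓ → ISet 1 ℓ (cBar (m : ℤ)) = ∅) ∧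
    (∀ ℓ : ℕ, 2 * m + 1 < ℓ → ISet 0 ℓ (cBar (-(m : ℤ))) = ∅) := by
  constructor
  · intro ℓ hℓ
    rw [Set.eq_empty_iff_forall_notMem]
    rintro mu ⟨hstrict, hge, hsum, hcol⟩
    have hlam : cBar (m : ℤ) = (List.range m).map fun i => 4 * (m - 1 - i) + 1 := by
      simp [cBar]
    have hlamD : ∀ j, (cBar (m : ℤ)).getD j 0 = if j < m then 4 * (m - 1 - j) + 1 else 0 := by
      intro j; rw [hlam]; exact getD_map_range m j _
    -- no new rows
    have hzero : ∀ j, m ≤ j → mu.getD j 0 = 0 := by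
      intro j hj
      by_contra h
      have h1 : nodeColor 1 = 1 := hcol j 1 (by rw [hlamD, if_neg (by omega)]; omega) (by omega)
      simp [nodeColor] at h1
    have hlen : mu.length ≤ m := by
      by_contra h
      push_neg at h
      have := hstrict.2 _ (List.getElem_mem (show m < mu.length by omega))
      have h0 := hzero m le_rfl
      rw [List.getD_eq_getElem _ _ (by omega)] at h0
      omega
    -- each row grows by at most 2
    have hle : ∀ j ∈ Finset.range m, mu.getD j 0 ≤ (cBar (m : ℤ)).getD j 0 + 2 := by
      intro j hj
      rw [Finset.mem_range] at hj
      by_contra h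
      push_neg at h
      have hc := hcol j ((cBar (m : ℤ)).getD j 0 + 3) (by omega) (by omega)
      rw [hlamD] at hc
      simp only [if_pos hj] at hc
      have : (4 * (m - 1 - j) + 1 + 3) % 4 = 0 := by omega
      simp [nodeColor, this] at hc
    have hlamsum : (cBar (m : ℤ)).sum = ∑ j ∈ Finset.range m, (cBar (m : ℤ)).getD j 0 :=
      sum_eq_sum_getD _ m (by rw [hlam]; simp)
    have hmusum : mu.sum = ∑ j ∈ Finset.range m, mu.getD j 0 := sum_eq_sum_getD _ m hlen
    have hbound : mu.sum ≤ (cBar (m : ℤ)).sum + 2 * m := by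
      rw [hmusum, hlamsum]
      calc ∑ j ∈ Finset.range m, mu.getD j 0
          ≤ ∑ j ∈ Finset.range m, ((cBar (m : ℤ)).getD j 0 + 2) := Finset.sum_le_sum hle
        _ = ∑ j ∈ Finset.range m, (cBar (m : ℤ)).getD j 0 + 2 * m := by
            rw [Finset.sum_add_distrib]; simp [mul_comm]
    omega
  · intro ℓ hℓ
    rw [Set.eq_empty_iff_forall_notMem]
    rintro mu ⟨hstrict, hge, hsum, hcol⟩
    have hlam : cBar (-(m : ℤ)) = (List.range m).map fun i => 4 * (m - 1 - i) + 3 := by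
      rw [cBar, if_neg (by omega)]
      simp
    have hlamD : ∀ j, (cBar (-(m : ℤ))).getD j 0 = if j < m then 4 * (m - 1 - j) + 3 else 0 := by
      intro j; rw [hlam]; exact getD_map_range m j _
    -- new rows have size at most 1
    have hone : ∀ j, m ≤ j → mu.getD j 0 ≤ 1 := by
      intro j hj
      by_contra h
      have h1 : nodeColor 2 = 0 := hcol j 2 (by rw [hlamD, if_neg (by omega)]; omega) (by omega)
      simp [nodeColor] at h1
    have hlen : mu.length ≤ m + 1 := by
      by_contra h
      push_neg at h
      have hgt := List.pairwise_iff_getElem.mp hstrict.1 m (m + 1) (by omega) (by omega)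
        (by omega)
      have hpos := hstrict.2 _ (List.getElem_mem (show m + 1 < mu.length by omega))
      have h0 := hone m le_rfl
      rw [List.getD_eq_getElem _ _ (by omega)] at h0
      omega
    have hle : ∀ j ∈ Finset.range m, mu.getD j 0 ≤ (cBar (-(m : ℤ))).getD j 0 + 2 := by
      intro j hj
      rw [Finset.mem_range] at hj
      by_contra h
      push_neg at h
      have hc := hcol j ((cBar (-(m : ℤ))).getD j 0 + 3) (by omega) (by omega)
      rw [hlamD] at hc
      simp only [if_pos hj] at hc
      have h2 : (4 * (m - 1 - j) + 3 + 3) % 4 = 2 := by omega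
      simp [nodeColor, h2] at hc
    have hlamsum : (cBar (-(m : ℤ))).sum = ∑ j ∈ Finset.range m, (cBar (-(m : ℤ))).getD j 0 :=
      sum_eq_sum_getD _ m (by rw [hlam]; simp)
    have hmusum : mu.sum = ∑ j ∈ Finset.range (m + 1), mu.getD j 0 := sum_eq_sum_getD _ _ hlen
    have hbound : mu.sum ≤ (cBar (-(m : ℤ))).sum + 2 * m + 1 := by
      rw [hmusum, Finset.sum_range_succ, hlamsum]
      have := hone m le_rfl
      have h1 : ∑ j ∈ Finset.range m, mu.getD j 0
          ≤ ∑ j ∈ Finset.range m, (cBar (-(m : ℤ))).getD j 0 + 2 * m := by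
        calc ∑ j ∈ Finset.range m, mu.getD j 0
            ≤ ∑ j ∈ Finset.range m, ((cBar (-(m : ℤ))).getD j 0 + 2) := Finset.sum_le_sum hle
          _ = _ := by rw [Finset.sum_add_distrib]; simp [mul_comm]
      omega
    omega

end Rect
end
end

section
/- For every integer ℓ ≥ 1 and all partitions λ and μ each with at most ℓ parts, the constant term (the coefficient of z_1^0 ⋯ z_ℓ^0) of the Laurent polynomial s_λ(z_1,…,z_ℓ) · s_μ(z_1^{−1},…,z_ℓ^{−1}) · Δ(z_1,…,z_ℓ) · Δ(z_1^{−1},…,z_ℓ^{−1}) equals ℓ! if λ = μ and equals 0 otherwise. -/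
noncomputable section

namespace Rect

/-- the monomial `z_i^e` in the Laurent polynomial ring `ℚ[z_1^{±1}, …, z_ℓ^{±1}]` -/
def zmon (ℓ : ℕ) (i : Fin ℓ) (e : ℤ) : AddMonoidAlgebra ℚ (Fin ℓ →₀ ℤ) :=
  AddMonoidAlgebra.single (Finsupp.single i e) 1

/-- `det ((z_i^ε)^{λ_j + ℓ - j})` in the Laurent polynomial ring; for `l = []`
this is the bialternant denominator `det ((z_i^ε)^{ℓ-j})`. -/
def bialtL (ℓ : ℕ) (ε : ℤ) (l : List ℕ) : AddMonoidAlgebra ℚ (Fin ℓ →₀ ℤ) :=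
  Matrix.det (Matrix.of fun i j : Fin ℓ =>
    zmon ℓ i (ε * ((l.getD j 0 : ℤ) + ((ℓ - 1 - (j : ℕ) : ℕ) : ℤ))))

/-- `Δ(z_1^ε, …, z_ℓ^ε) = Π_{i<j} (z_j^ε - z_i^ε)` in the Laurent polynomial ring -/
def vandL (ℓ : ℕ) (ε : ℤ) : AddMonoidAlgebra ℚ (Fin ℓ →₀ ℤ) :=
  ∏ p ∈ Finset.univ.filter (fun p : Fin ℓ × Fin ℓ => p.1 < p.2),
    (zmon ℓ p.2 ε - zmon ℓ p.1 ε)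

/-! ### Auxiliary lemmas -/

/-- exponent sequence of a partition -/
def expo (ℓ : ℕ) (l : List ℕ) (j : Fin ℓ) : ℤ :=
  (l.getD j 0 : ℤ) + ((ℓ - 1 - (j : ℕ) : ℕ) : ℤ)

lemma zmon_pow (ℓ : ℕ) (i : Fin ℓ) (ε : ℤ) (n : ℕ) :
    zmon ℓ i ε ^ n = zmon ℓ i (n * ε) := by
  rw [zmon, AddMonoidAlgebra.single_pow, one_pow, zmon]
  congr 1
  rw [Finsupp.smul_single]
  norm_num

lemma prod_single (ℓ : ℕ) (f : Fin ℓ → (Fin ℓ →₀ ℤ)) :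
    (∏ i, (AddMonoidAlgebra.single (f i) (1 : ℚ) : AddMonoidAlgebra ℚ (Fin ℓ →₀ ℤ)))
      = AddMonoidAlgebra.single (∑ i, f i) 1 := by
  classical
  induction (Finset.univ : Finset (Fin ℓ)) using Finset.induction_on with
  | empty => simp [AddMonoidAlgebra.one_def]
  | insert _ _ h ih =>
      rw [Finset.prod_insert h, Finset.sum_insert h, ih,
        AddMonoidAlgebra.single_mul_single, one_mul]

lemma bialt_eq_sum (ℓ : ℕ) (ε : ℤ) (l : List ℕ) :
    bialtL ℓ ε l = ∑ σ : Equiv.Perm (Fin ℓ),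
      (((Equiv.Perm.sign σ : ℤ) : ℚ)) •
        (AddMonoidAlgebra.single (∑ i, Finsupp.single (σ i) (ε * expo ℓ l i)) (1 : ℚ)
          : AddMonoidAlgebra ℚ (Fin ℓ →₀ ℤ)) := by
  rw [bialtL, Matrix.det_apply]
  refine Finset.sum_congr rfl fun σ _ => ?_
  rw [Int.cast_smul_eq_zsmul, Units.smul_def]
  congr 1
  have : ∀ i : Fin ℓ,
      (Matrix.of fun i j : Fin ℓ =>
        zmon ℓ i (ε * ((l.getD j 0 : ℤ) + ((ℓ - 1 - (j : ℕ) : ℕ) : ℤ)))) (σ i) i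
      = AddMonoidAlgebra.single (Finsupp.single (σ i) (ε * expo ℓ l i)) (1 : ℚ) := by
    intro i; rfl
  rw [Finset.prod_congr rfl (fun i _ => this i), prod_single]

lemma sum_single_apply (ℓ : ℕ) (σ : Equiv.Perm (Fin ℓ)) (e : Fin ℓ → ℤ) (k : Fin ℓ) :
    (∑ i, Finsupp.single (σ i) (e i)) k = e (σ.symm k) := by
  classical
  rw [Finsupp.finset_sum_apply]
  rw [Finset.sum_eq_single (σ.symm k)]
  · simp [Finsupp.single_apply]
  · intro b _ hb
    rw [Finsupp.single_apply, if_neg]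
    intro h
    exact hb (by simpa using congrArg σ.symm h)
  · simp

lemma getD_mono {l : List ℕ} (hl : l.Pairwise (· ≥ ·)) {i j : ℕ} (hij : i ≤ j) :
    l.getD j 0 ≤ l.getD i 0 := by
  by_cases hj : j < l.length
  · have hi : i < l.length := lt_of_le_of_lt hij hj
    rw [List.getD_eq_getElem l 0 hj, List.getD_eq_getElem l 0 hi]
    rcases eq_or_lt_of_le hij with rfl | h
    · exact le_refl _
    · exact hl.rel_get_of_lt (a := ⟨i, hi⟩) (b := ⟨j, hj⟩) h
  · rw [List.getD_eq_default l 0 (le_of_not_gt hj)]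
    exact Nat.zero_le _

lemma expo_strictAnti (ℓ : ℕ) {l : List ℕ} (hl : l.Pairwise (· ≥ ·)) :
    StrictAnti (expo ℓ l) := by
  intro i j hij
  have h1 : l.getD (j : ℕ) 0 ≤ l.getD (i : ℕ) 0 := getD_mono hl (le_of_lt hij)
  have hj := j.isLt
  have hij' : (i : ℕ) < (j : ℕ) := hij
  unfold expo
  omega

lemma lists_eq (ℓ : ℕ) {lam mu : List ℕ}
    (hlam : IsPartition lam) (hlaml : lam.length ≤ ℓ)
    (hmu : IsPartition mu) (hmul : mu.length ≤ ℓ)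
    (h : ∀ j : Fin ℓ, expo ℓ lam j = expo ℓ mu j) : lam = mu := by
  have hD : ∀ n : ℕ, lam.getD n 0 = mu.getD n 0 := by
    intro n
    by_cases hn : n < ℓ
    · have := h ⟨n, hn⟩
      unfold expo at this
      simp only at this
      omega
    · rw [List.getD_eq_default lam 0 (by omega), List.getD_eq_default mu 0 (by omega)]
  have hlen : lam.length = mu.length := by
    by_contra hne
    rcases Nat.lt_or_ge lam.length mu.length with hlt | hge
    · have h1 := hD lam.length
      rw [List.getD_eq_default lam 0 le_rfl, List.getD_eq_getElem mu 0 hlt] at h1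
      exact absurd (hmu.2 _ (mu.getElem_mem hlt)) (by omega)
    · have hlt : mu.length < lam.length := by omega
      have h1 := hD mu.length
      rw [List.getD_eq_default mu 0 le_rfl, List.getD_eq_getElem lam 0 hlt] at h1
      exact absurd (hlam.2 _ (lam.getElem_mem hlt)) (by omega)
  apply List.ext_getElem hlen
  intro n h1 h2
  have := hD n
  rwa [List.getD_eq_getElem lam 0 h1, List.getD_eq_getElem mu 0 h2] at this

lemma cond_iff (ℓ : ℕ) {lam mu : List ℕ}
    (hlam : IsPartition lam) (hlaml : lam.length ≤ ℓ)
    (hmu : IsPartition mu) (hmul : mu.length ≤ ℓ)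
    (σ τ : Equiv.Perm (Fin ℓ)) :
    (∑ i, Finsupp.single (σ i) (expo ℓ lam i))
      = (∑ i, Finsupp.single (τ i) (expo ℓ mu i)) ↔ lam = mu ∧ σ = τ := by
  constructor
  · intro h
    have hk : ∀ k, expo ℓ lam (σ.symm k) = expo ℓ mu (τ.symm k) := by
      intro k
      have := congrFun (congrArg (DFunLike.coe) h) k
      rwa [sum_single_apply, sum_single_apply] at this
    have hA := expo_strictAnti ℓ hlam.1
    have hB := expo_strictAnti ℓ hmu.1
    set π : Equiv.Perm (Fin ℓ) := τ.trans σ.symm with hπ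
    have hval : ∀ j, expo ℓ lam (π j) = expo ℓ mu j := by
      intro j
      have := hk (τ j)
      simpa [hπ] using this
    have hmono : StrictMono (π : Fin ℓ → Fin ℓ) := by
      intro a b hab
      have h1 : expo ℓ mu b < expo ℓ mu a := hB hab
      have h2 : expo ℓ lam (π b) < expo ℓ lam (π a) := by
        rw [hval, hval]; exact h1
      by_contra hc
      push_neg at hc
      rcases eq_or_lt_of_le hc with heq | hlt
      · rw [heq] at h2; exact lt_irrefl _ h2
      · exact absurd (hA hlt) (by omega)
    have hrange : Set.range (π : Fin ℓ → Fin ℓ) = Set.range (id : Fin ℓ → Fin ℓ) := by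
      rw [Set.range_id]
      exact Set.range_eq_univ.mpr π.surjective
    have hid : (π : Fin ℓ → Fin ℓ) = id := by
      haveI : WellFoundedLT (Fin ℓ) := inferInstance
      exact (StrictMono.range_inj hmono (strictMono_id (α := Fin ℓ))).mp hrange
    have hστ : σ = τ := by
      apply Equiv.ext
      intro j
      have h1 : σ.symm (τ j) = j := congrFun hid j
      have h2 := congrArg σ h1
      simp only [Equiv.apply_symm_apply] at h2
      exact h2.symm
    have hlm : lam = mu := by
      apply lists_eq ℓ hlam hlaml hmu hmul
      intro j
      have h1 := hval j
      rw [show π j = j from congrFun hid j] at h1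
      exact h1
    exact ⟨hlm, hστ⟩
  · rintro ⟨rfl, rfl⟩
    rfl

lemma vand_det (ℓ : ℕ) (ε : ℤ) :
    vandL ℓ ε = Matrix.det (Matrix.vandermonde (fun i : Fin ℓ => zmon ℓ i ε)) := by
  rw [Matrix.det_vandermonde, vandL]
  rw [Finset.prod_sigma']
  refine Finset.prod_nbij' (fun p => ⟨p.1, p.2⟩) (fun q => (q.1, q.2)) ?_ ?_ ?_ ?_ ?_
  · intro p hp
    simp only [Finset.mem_filter, Finset.mem_univ, true_and] at hp
    simp [Finset.mem_Ioi, hp]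
  · intro q hq
    simp only [Finset.mem_sigma, Finset.mem_univ, Finset.mem_Ioi, true_and] at hq
    simp [hq]
  · intro p _; rfl
  · intro q _; rfl
  · intro p _; rfl

lemma bialt_nil (ℓ : ℕ) (ε : ℤ) :
    bialtL ℓ ε [] =
      ((Equiv.Perm.sign (Fin.revPerm : Equiv.Perm (Fin ℓ)) : ℤ) : AddMonoidAlgebra ℚ (Fin ℓ →₀ ℤ))
        * vandL ℓ ε := by
  have h : bialtL ℓ ε [] =
      Matrix.det ((Matrix.vandermonde (fun i : Fin ℓ => zmon ℓ i ε)).submatrix id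
        (Fin.revPerm : Equiv.Perm (Fin ℓ))) := by
    rw [bialtL]
    congr 1
    ext i j
    simp only [Matrix.of_apply, Matrix.submatrix_apply, Matrix.vandermonde, Matrix.of_apply,
      id_eq, Fin.revPerm_apply]
    rw [zmon_pow]
    congr 1
    have h1 : ([].getD (j : ℕ) 0 : ℕ) = 0 := rfl
    have h2 : ((Fin.rev j : Fin ℓ) : ℕ) = ℓ - 1 - (j : ℕ) := by
      rw [Fin.val_rev]; omega
    rw [h1, h2]
    push_cast
    ring
  rw [h, Matrix.det_permute', vand_det]

/-- **Orthogonality**: for partitions `λ, μ` with at most `ℓ` parts, the constant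
term of `s_λ(z) · s_μ(z⁻¹) · Δ(z) · Δ(z⁻¹)` equals `ℓ!` if `λ = μ` and `0`
otherwise.  Here `P = s_λ(z)` and `Q = s_μ(z⁻¹)` are characterized by the
bialternant formulas `P · det(z_i^{ℓ-j}) = det(z_i^{λ_j+ℓ-j})` and
`Q · det(z_i^{-(ℓ-j)}) = det(z_i^{-(μ_j+ℓ-j)})`. -/
theorem schur_orthogonality (ℓ : ℕ) (hℓ : 1 ≤ ℓ) (lam mu : List ℕ)
    (hlam : IsPartition lam) (hlaml : lam.length ≤ ℓ)
    (hmu : IsPartition mu) (hmul : mu.length ≤ ℓ)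
    (P Q : AddMonoidAlgebra ℚ (Fin ℓ →₀ ℤ))
    (hP : P * bialtL ℓ 1 [] = bialtL ℓ 1 lam)
    (hQ : Q * bialtL ℓ (-1) [] = bialtL ℓ (-1) mu) :
    (P * Q * vandL ℓ 1 * vandL ℓ (-1)).coeff 0 =
      (if lam = mu then (Nat.factorial ℓ : ℚ) else 0) := by
  classical
  set s : AddMonoidAlgebra ℚ (Fin ℓ →₀ ℤ) :=
    ((Equiv.Perm.sign (Fin.revPerm : Equiv.Perm (Fin ℓ)) : ℤ) : AddMonoidAlgebra ℚ (Fin ℓ →₀ ℤ))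
    with hs_def
  have hss : s * s = 1 := by
    rw [hs_def, ← Int.cast_mul, ← Units.val_mul, Int.units_mul_self]
    simp
  have hmain : P * Q * vandL ℓ 1 * vandL ℓ (-1) = bialtL ℓ 1 lam * bialtL ℓ (-1) mu := by
    rw [← hP, ← hQ, bialt_nil, bialt_nil, ← hs_def]
    calc P * Q * vandL ℓ 1 * vandL ℓ (-1)
        = (s * s) * (P * Q * vandL ℓ 1 * vandL ℓ (-1)) := by rw [hss, one_mul]
      _ = P * (s * vandL ℓ 1) * (Q * (s * vandL ℓ (-1))) := by ring
  have hterm : ∀ σ τ : Equiv.Perm (Fin ℓ),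
      (((Equiv.Perm.sign σ : ℤ) : ℚ) •
        (AddMonoidAlgebra.single (∑ i, Finsupp.single (σ i) ((1:ℤ) * expo ℓ lam i)) (1:ℚ)
          : AddMonoidAlgebra ℚ (Fin ℓ →₀ ℤ))) *
      (((Equiv.Perm.sign τ : ℤ) : ℚ) •
        AddMonoidAlgebra.single (∑ i, Finsupp.single (τ i) ((-1:ℤ) * expo ℓ mu i)) (1:ℚ))
      = (((Equiv.Perm.sign σ : ℤ) : ℚ) * ((Equiv.Perm.sign τ : ℤ) : ℚ)) •
        AddMonoidAlgebra.single
          ((∑ i, Finsupp.single (σ i) (expo ℓ lam i)) - (∑ i, Finsupp.single (τ i) (expo ℓ mu i)))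
          (1:ℚ) := by
    intro σ τ
    have hexp : (∑ i, Finsupp.single (σ i) ((1:ℤ) * expo ℓ lam i))
        + (∑ i, Finsupp.single (τ i) ((-1:ℤ) * expo ℓ mu i))
        = (∑ i, Finsupp.single (σ i) (expo ℓ lam i))
          - (∑ i, Finsupp.single (τ i) (expo ℓ mu i)) := by
      simp only [one_mul, neg_one_mul, Finsupp.single_neg, sub_eq_add_neg,
        Finset.sum_neg_distrib]
    rw [smul_mul_smul_comm, AddMonoidAlgebra.single_mul_single, one_mul, hexp]
  have hcoef : (P * Q * vandL ℓ 1 * vandL ℓ (-1)).coeff 0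
      = ∑ σ : Equiv.Perm (Fin ℓ), ∑ τ : Equiv.Perm (Fin ℓ),
          (((Equiv.Perm.sign σ : ℤ) : ℚ) * ((Equiv.Perm.sign τ : ℤ) : ℚ))
            * (if lam = mu ∧ σ = τ then (1:ℚ) else 0) := by
    rw [hmain, bialt_eq_sum, bialt_eq_sum, Finset.sum_mul_sum]
    rw [AddMonoidAlgebra.coeff_sum, Finsupp.finset_sum_apply]
    refine Finset.sum_congr rfl fun σ _ => ?_
    rw [AddMonoidAlgebra.coeff_sum, Finsupp.finset_sum_apply]
    refine Finset.sum_congr rfl fun τ _ => ?_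
    rw [hterm σ τ, AddMonoidAlgebra.coeff_smul_apply, AddMonoidAlgebra.coeff_single, Finsupp.single_apply, smul_eq_mul]
    congr 1
    have hiff := cond_iff ℓ hlam hlaml hmu hmul σ τ
    by_cases hc : lam = mu ∧ σ = τ
    · rw [if_pos (sub_eq_zero.mpr (hiff.mpr hc)), if_pos hc]
    · rw [if_neg (fun h => hc (hiff.mp (sub_eq_zero.mp h))), if_neg hc]
  rw [hcoef]
  by_cases hlm : lam = mu
  · rw [if_pos hlm]
    simp only [hlm, true_and]
    have : ∀ σ : Equiv.Perm (Fin ℓ),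
        (∑ τ : Equiv.Perm (Fin ℓ),
          (((Equiv.Perm.sign σ : ℤ) : ℚ) * ((Equiv.Perm.sign τ : ℤ) : ℚ))
            * (if σ = τ then (1:ℚ) else 0)) = 1 := by
      intro σ
      rw [Finset.sum_eq_single σ]
      · rw [if_pos rfl, mul_one, ← Int.cast_mul, ← Units.val_mul, Int.units_mul_self]
        simp
      · intro τ _ hτ
        rw [if_neg (fun h => hτ h.symm), mul_zero]
      · intro h
        exact absurd (Finset.mem_univ σ) h
    rw [Finset.sum_congr rfl fun σ _ => this σ]
    simp [Fintype.card_perm]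
  · rw [if_neg hlm]
    simp [hlm]

end Rect
end
end

section
/- For all integers m ≥ 0 and ℓ with 1 ≤ ℓ ≤ 2m+1, the coefficient of the monomial z_1^{2m} z_2^{2m} ⋯ z_ℓ^{2m} in the formal power series Δ(z)² · exp(Σ_{j=1}^{ℓ} Σ_{n≥1} t_n z_j^n) ∈ ℚ[t][[z_1,…,z_ℓ]] equals (−1)^{ℓ(ℓ−1)/2} · ℓ! · S_{□(ℓ, 2m+1−ℓ)}(t). -/
noncomputable section

/-- The ring `ℚ[t₁, t₂, t₃, …]`. -/
abbrev R : Type := MvPolynomial ℕ+ ℚ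

namespace Rect

/-- the variable `t_n` for `n ≥ 1` -/
def tv (n : ℕ+) : R := MvPolynomial.X n

/-- the power series `Σ_{n≥1} t_n z^n` -/
def tser : PowerSeries R := PowerSeries.mk fun n => if h : 0 < n then tv ⟨n, h⟩ else 0

/-- the power series `Σ_{n≥1} t_{2n-1} z^{2n-1}` -/
def tserOdd : PowerSeries R :=
  PowerSeries.mk fun n => if h : 0 < n ∧ n % 2 = 1 then tv ⟨n, h.1⟩ else 0

/-- Exponential of a power series with zero constant term, coefficientwise:
`coeff n (exp G) = Σ_{k} coeff n (G^k) / k!` (only `k ≤ n` contribute). -/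
def psExp {A : Type} [Ring A] [Algebra ℚ A] (G : PowerSeries A) : PowerSeries A :=
  PowerSeries.mk fun n => ∑ k ∈ Finset.range (n + 1), ((Nat.factorial k : ℚ))⁻¹ • PowerSeries.coeff n (G ^ k)

/-- `h_n(t)`, defined by `exp (Σ_{n≥1} t_n z^n) = Σ_{n≥0} h_n(t) z^n` -/
def hp (n : ℕ) : R := PowerSeries.coeff n (psExp tser)

/-- `h_k` for `k : ℤ`, with `h_k = 0` for `k < 0` -/
def hz (k : ℤ) : R := if k < 0 then 0 else hp k.toNat

/-- `q_n(t)`, defined by `exp (Σ_{n≥1} t_{2n-1} z^{2n-1}) = Σ_{n≥0} q_n(t) z^n` -/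
def qp (n : ℕ) : R := PowerSeries.coeff n (psExp tserOdd)

/-- the Schur S-function `S_λ(t) = det (h_{λ_i - i + j})` of a (weakly decreasing) list -/
def SchurS (l : List ℕ) : R :=
  Matrix.det (Matrix.of fun i j : Fin l.length => hz ((l.get i : ℤ) - (i : ℕ) + (j : ℕ)))

/-- the substitution `t_j ↦ t_{2j}`, so that `SchurS l (t^{(2)}) = dbl (SchurS l)` -/
def dbl : R →ₐ[ℚ] R := MvPolynomial.rename fun j => 2 * j

/-- `Q_{m,n}` for `m > n ≥ 0`. -/
def QQaux (a b : ℕ) : R :=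
  qp a * qp b + 2 * ∑ i ∈ Finset.Icc 1 b, (-1 : R) ^ i * (qp (a + i) * qp (b - i))

/-- the two-row Schur Q-function `Q_{a,b}` -/
def QQ (a b : ℕ) : R := if b < a then QQaux a b else if a < b then -QQaux b a else 0

lemma eraseIdx_length_lt (a : ℕ) (rest : List ℕ) (j : ℕ) :
    (rest.eraseIdx j).length < (a :: rest).length :=
  Nat.lt_succ_of_le (List.length_eraseIdx_le rest j)

/-- the Pfaffian of `(Q_{λ_i,λ_j})`, by expansion along the first row -/
def QPf : List ℕ → R
  | [] => 1
  | a :: rest =>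
    ∑ j ∈ Finset.range rest.length,
      (-1 : R) ^ j * QQ a (rest.getD j 0) * QPf (rest.eraseIdx j)
  termination_by l => l.length
  decreasing_by exact eraseIdx_length_lt a rest j

/-- the Schur Q-function of a strict partition (a `0` part is appended if the
number of parts is odd) -/
def SchurQ (l : List ℕ) : R := QPf (if l.length % 2 = 0 then l else l ++ [0])


/-- coefficientwise exponential of a multivariate power series with zero
constant term: `coeff α (exp G) = Σ_k coeff α (G^k) / k!` (only `k ≤ |α|` contribute) -/
def mvExp {σ : Type} (G : MvPowerSeries σ R) : MvPowerSeries σ R :=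
  fun α => ∑ k ∈ Finset.range ((α.sum fun _ n => n) + 1),
    ((Nat.factorial k : ℚ))⁻¹ • MvPowerSeries.coeff α (G ^ k)

/-- the series `Ξ = Σ_{j=1}^{ℓ} Σ_{n≥1} t_n z_j^n` -/
def Xi (ℓ : ℕ) : MvPowerSeries (Fin ℓ) R :=
  fun α => if h : α.support.card = 1 ∧ 0 < (α.sum fun _ n => n)
    then tv ⟨α.sum fun _ n => n, h.2⟩ else 0

/-- the Vandermonde determinant `Δ(z) = Π_{i<j} (z_j - z_i)` as a power series -/
def vandPS (ℓ : ℕ) : MvPowerSeries (Fin ℓ) R :=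
  ∏ p ∈ Finset.univ.filter (fun p : Fin ℓ × Fin ℓ => p.1 < p.2),
    (MvPowerSeries.X p.2 - MvPowerSeries.X p.1)

/-- the bialternant numerator `det (z_i^{λ_j + ℓ - j})` -/
def bialtPoly (ℓ : ℕ) (l : List ℕ) : MvPolynomial (Fin ℓ) ℚ :=
  Matrix.det (Matrix.of fun i j : Fin ℓ => (MvPolynomial.X i) ^ (l.getD j 0 + (ℓ - 1 - (j : ℕ))))

/-- the bialternant denominator `det (z_i^{ℓ - j})` -/
def denomPoly (ℓ : ℕ) : MvPolynomial (Fin ℓ) ℚ :=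
  Matrix.det (Matrix.of fun i j : Fin ℓ => (MvPolynomial.X i) ^ (ℓ - 1 - (j : ℕ)))

/-- the conjugate (transpose) of a partition -/
def conjP (l : List ℕ) : List ℕ :=
  (List.range (l.getD 0 0)).map fun i => l.countP fun x => decide (i < x)

/-! ### Auxiliary lemmas -/

section Aux

open MvPowerSeries Finset Equiv

lemma rev_key (k : ℕ) :
    Equiv.Perm.decomposeFin.symm (0, (Fin.revPerm : Equiv.Perm (Fin k)))
      = finRotate (k+1) * (Fin.revPerm : Equiv.Perm (Fin (k+1))) := by
  ext i
  refine Fin.cases ?_ (fun x => ?_) i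
  · simp [Fin.rev_zero, finRotate_last]
  · rw [Equiv.Perm.decomposeFin_symm_apply_succ]
    simp only [Equiv.swap_self, Equiv.refl_apply, Equiv.Perm.mul_apply, Fin.revPerm_apply]
    have hx := x.isLt
    rw [coe_finRotate]
    split_ifs with h
    · exfalso
      have := congrArg Fin.val h
      simp [Fin.val_rev, Fin.val_last] at this
      omega
    · have hne : (x.succ.rev : Fin (k+1)).val ≠ k := fun hh => h (Fin.ext (by simpa using hh))
      simp only [Fin.val_rev, Fin.val_succ] at hne ⊢
      omega

lemma sign_revPerm (n : ℕ) :
    Equiv.Perm.sign (Fin.revPerm : Equiv.Perm (Fin n)) = (-1) ^ (n * (n-1) / 2) := by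
  induction n with
  | zero =>
      have : (Fin.revPerm : Equiv.Perm (Fin 0)) = 1 := Subsingleton.elim _ _
      simp [this]
  | succ k ih =>
      have h := congrArg Equiv.Perm.sign (rev_key k)
      rw [Equiv.Perm.decomposeFin.symm_sign, if_pos rfl, one_mul, ih, map_mul,
        sign_finRotate] at h
      have : Equiv.Perm.sign (Fin.revPerm : Equiv.Perm (Fin (k+1)))
          = (-1)^k * (-1) ^ (k * (k-1) / 2) := by
        have h2 := congrArg (fun u => ((-1:ℤˣ)^k) * u) h
        simpa [← mul_assoc, ← pow_add, ← two_mul, pow_mul] using h2.symm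
      rw [this, ← pow_add, Nat.triangle_succ]
      ring_nf

/-- total degree of an exponent, as an additive monoid hom -/
def degHom (σ : Type) : (σ →₀ ℕ) →+ ℕ where
  toFun α := α.sum fun _ n => n
  map_zero' := Finsupp.sum_zero_index
  map_add' := fun a b => by
    show ((a + b).sum fun _ n => n) = (a.sum fun _ n => n) + (b.sum fun _ n => n)
    exact Finsupp.sum_add_index' (fun _ => rfl) (fun _ _ _ => rfl)

variable {σ : Type} [DecidableEq σ]

lemma degHom_eq_zero {α : σ →₀ ℕ} (h : degHom σ α = 0) : α = 0 := by
  have h2 : (α.sum fun _ n => n) = 0 := h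
  rw [Finsupp.sum] at h2
  have h' : ∀ i ∈ α.support, α i = 0 := Finset.sum_eq_zero_iff.mp h2
  ext i
  by_cases hi : i ∈ α.support
  · exact h' i hi
  · exact Finsupp.notMem_support_iff.mp hi

lemma coeff_pow_eq_zero {G : MvPowerSeries σ R} (hG : constantCoeff G = 0)
    {α : σ →₀ ℕ} {k : ℕ} (hk : degHom σ α < k) : coeff α (G ^ k) = 0 := by
  rw [show G ^ k = ∏ _j ∈ range k, G by simp, coeff_prod]
  refine Finset.sum_eq_zero fun l hl => ?_
  rw [Finset.mem_finsuppAntidiag] at hl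
  by_cases h : ∀ j ∈ range k, l j ≠ 0
  · exfalso
    have h1 : degHom σ α = ∑ j ∈ range k, degHom σ (l j) := by
      rw [← hl.1, map_sum]
    have h2 : ∀ j ∈ range k, 1 ≤ degHom σ (l j) := fun j hj =>
      Nat.one_le_iff_ne_zero.mpr fun h0 => h j hj (degHom_eq_zero h0)
    have h3 : k ≤ degHom σ α := by
      rw [h1]
      calc k = ∑ _j ∈ range k, 1 := by simp
      _ ≤ _ := Finset.sum_le_sum h2
    omega
  · push_neg at h
    obtain ⟨j, hj, hj0⟩ := h
    refine Finset.prod_eq_zero hj ?_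
    rw [hj0, coeff_zero_eq_constantCoeff_apply]
    exact hG

lemma coeff_mvExp (G : MvPowerSeries σ R) (α : σ →₀ ℕ) :
    coeff α (mvExp G)
      = ∑ k ∈ range (degHom σ α + 1), ((k.factorial : ℚ))⁻¹ • coeff α (G ^ k) := by
  rw [coeff_apply]; rfl

lemma coeff_mvExp_of_le {G : MvPowerSeries σ R} (hG : constantCoeff G = 0)
    {α : σ →₀ ℕ} {M : ℕ} (hM : degHom σ α ≤ M) :
    coeff α (mvExp G) = ∑ k ∈ range (M+1), ((k.factorial : ℚ))⁻¹ • coeff α (G ^ k) := by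
  rw [coeff_mvExp]
  refine Finset.sum_subset (fun x hx => ?_) fun x hx hxn => ?_
  · simp only [mem_range] at *; omega
  · simp only [mem_range] at hx hxn
    rw [coeff_pow_eq_zero hG (by omega), smul_zero]

lemma mvExp_zero : mvExp (0 : MvPowerSeries σ R) = 1 := by
  apply MvPowerSeries.ext
  intro α
  rw [coeff_mvExp]
  rw [Finset.sum_eq_single 0]
  · simp
  · intro k _ hk0
    rw [zero_pow hk0, map_zero, smul_zero]
  · intro h; exact absurd (Finset.mem_range.mpr (Nat.succ_pos _)) h

lemma coeff_mul_pow_eq_zero {G H : MvPowerSeries σ R} (hG : constantCoeff G = 0)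
    (hH : constantCoeff H = 0) {α : σ →₀ ℕ} {a b : ℕ} (hab : degHom σ α < a + b) :
    coeff α (G ^ a * H ^ b) = 0 := by
  rw [coeff_mul]
  refine Finset.sum_eq_zero fun p hp => ?_
  rw [Finset.HasAntidiagonal.mem_antidiagonal] at hp
  have hd : degHom σ p.1 + degHom σ p.2 = degHom σ α := by rw [← map_add, hp]
  by_cases h : degHom σ p.1 < a
  · rw [coeff_pow_eq_zero hG h, zero_mul]
  · rw [coeff_pow_eq_zero hH (by omega), mul_zero]

lemma mvExp_add {G H : MvPowerSeries σ R} (hG : constantCoeff G = 0)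
    (hH : constantCoeff H = 0) :
    mvExp (G + H) = mvExp G * mvExp H := by
  apply MvPowerSeries.ext
  intro α
  set N := degHom σ α with hN
  set f : ℕ → ℕ → R := fun a b =>
    (((a.factorial * b.factorial : ℕ)) : ℚ)⁻¹ • coeff α (G ^ a * H ^ b) with hf
  have key : ∀ a b : ℕ, N < a + b → f a b = 0 := fun a b h => by
    rw [hf]; dsimp only; rw [coeff_mul_pow_eq_zero hG hH h, smul_zero]
  have hGH : constantCoeff (G + H) = 0 := by rw [map_add, hG, hH, add_zero]
  have hsq : ∀ g : ℕ → ℕ → R, (∀ a b, N < a + b → g a b = 0) →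
      ∑ a ∈ range (N+1), ∑ b ∈ range (N+1), g a b
        = ∑ a ∈ range (N+1), ∑ b ∈ range (N+1-a), g a b := by
    intro g hg
    refine Finset.sum_congr rfl fun a ha => ?_
    rw [mem_range] at ha
    refine (Finset.sum_subset (fun x hx => ?_) fun x hx hxn => ?_).symm
    · simp only [mem_range] at *; omega
    · simp only [mem_range] at hx hxn
      exact hg a x (by omega)
  -- LHS
  have lhs_eq : coeff α (mvExp (G + H))
      = ∑ a ∈ range (N+1), ∑ b ∈ range (N+1-a), f a b := by
    rw [coeff_mvExp (G + H) α, ← hN]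
    have step1 : ∀ k : ℕ, ((k.factorial : ℚ))⁻¹ • coeff α ((G + H) ^ k)
        = ∑ x ∈ range (k+1), f x (k - x) := by
      intro k
      rw [add_pow, map_sum, Finset.smul_sum]
      refine Finset.sum_congr rfl fun x hx => ?_
      rw [mem_range] at hx
      have hx' : x ≤ k := by omega
      have hcast : ∀ (F : MvPowerSeries σ R) (c : ℕ),
          coeff α (F * (c : MvPowerSeries σ R)) = c • coeff α F := by
        intro F c
        rw [mul_comm, ← nsmul_eq_mul, map_nsmul]
      rw [hcast, ← Nat.cast_smul_eq_nsmul ℚ, smul_smul, hf]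
      dsimp only
      congr 1
      have h := Nat.choose_mul_factorial_mul_factorial hx'
      have h1 : ((k.factorial : ℚ)) ≠ 0 := Nat.cast_ne_zero.mpr (Nat.factorial_ne_zero k)
      have h2 : ((x.factorial * (k-x).factorial : ℕ) : ℚ) ≠ 0 :=
        Nat.cast_ne_zero.mpr (Nat.mul_ne_zero (Nat.factorial_ne_zero _) (Nat.factorial_ne_zero _))
      field_simp
      push_cast [← h]
      ring
    rw [Finset.sum_congr rfl fun k _ => step1 k]
    rw [Finset.sum_sigma', Finset.sum_sigma']
    refine Finset.sum_nbij' (fun p => ⟨p.2, p.1 - p.2⟩) (fun q => ⟨q.1 + q.2, q.1⟩)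
      ?_ ?_ ?_ ?_ ?_
    · rintro ⟨k, x⟩ hp
      simp only [Finset.mem_sigma, mem_range] at hp ⊢
      omega
    · rintro ⟨a, b⟩ hq
      simp only [Finset.mem_sigma, mem_range] at hq ⊢
      omega
    · rintro ⟨k, x⟩ hp
      simp only [Finset.mem_sigma, mem_range] at hp
      exact Sigma.ext (by dsimp only; omega) (heq_of_eq rfl)
    · rintro ⟨a, b⟩ hq
      simp only [Finset.mem_sigma, mem_range] at hq
      exact Sigma.ext rfl (heq_of_eq (by dsimp only; omega))
    · rintro ⟨k, x⟩ _
      rfl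
  -- RHS
  have rhs_eq : coeff α (mvExp G * mvExp H)
      = ∑ a ∈ range (N+1), ∑ b ∈ range (N+1-a), f a b := by
    rw [coeff_mul]
    have step1 : ∀ p : (σ →₀ ℕ) × (σ →₀ ℕ), p ∈ antidiagonal α →
        coeff p.1 (mvExp G) * coeff p.2 (mvExp H)
          = ∑ a ∈ range (N+1), ∑ b ∈ range (N+1),
              (((a.factorial * b.factorial : ℕ)) : ℚ)⁻¹ •
                (coeff p.1 (G ^ a) * coeff p.2 (H ^ b)) := by
      intro p hp
      rw [Finset.HasAntidiagonal.mem_antidiagonal] at hp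
      have hdeg : degHom σ p.1 + degHom σ p.2 = N := by rw [hN, ← hp, map_add]
      rw [coeff_mvExp_of_le hG (by omega : degHom σ p.1 ≤ N),
        coeff_mvExp_of_le hH (by omega : degHom σ p.2 ≤ N), Finset.sum_mul_sum]
      refine Finset.sum_congr rfl fun a _ => Finset.sum_congr rfl fun b _ => ?_
      rw [smul_mul_smul_comm]
      congr 1
      push_cast
      rw [mul_inv]
    rw [Finset.sum_congr rfl step1]
    rw [Finset.sum_comm]
    have swap2 : ∀ a, ∑ p ∈ antidiagonal α, ∑ b ∈ range (N+1),
        (((a.factorial * b.factorial : ℕ)) : ℚ)⁻¹ •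
          (coeff p.1 (G ^ a) * coeff p.2 (H ^ b))
        = ∑ b ∈ range (N+1), f a b := by
      intro a
      rw [Finset.sum_comm]
      refine Finset.sum_congr rfl fun b _ => ?_
      rw [hf]
      dsimp only
      rw [coeff_mul, Finset.smul_sum]
    rw [Finset.sum_congr rfl fun a _ => swap2 a, hsq f key]
  rw [lhs_eq, rhs_eq]

lemma mvExp_sum {ι : Type} (s : Finset ι) (F : ι → MvPowerSeries σ R)
    (h : ∀ i ∈ s, constantCoeff (F i) = 0) :
    mvExp (∑ i ∈ s, F i) = ∏ i ∈ s, mvExp (F i) := by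
  classical
  induction s using Finset.induction_on with
  | empty => simpa using mvExp_zero
  | @insert j s hj ih =>
      rw [Finset.sum_insert hj, Finset.prod_insert hj,
        mvExp_add (h j (Finset.mem_insert_self j s))
          (by rw [map_sum]; exact Finset.sum_eq_zero fun i hi => h i (Finset.mem_insert_of_mem hi)),
        ih fun i hi => h i (Finset.mem_insert_of_mem hi)]

end Aux


section OneVar

open MvPowerSeries Finset

variable {ℓ : ℕ}

/-- a power series placed in the single variable `z_i` -/
def oneVar (i : Fin ℓ) (f : PowerSeries R) : MvPowerSeries (Fin ℓ) R :=
  fun β => if β = Finsupp.single i (β i) then PowerSeries.coeff (β i) f else 0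

lemma coeff_oneVar (i : Fin ℓ) (f : PowerSeries R) (β : Fin ℓ →₀ ℕ) :
    coeff β (oneVar i f)
      = if β = Finsupp.single i (β i) then PowerSeries.coeff (β i) f else 0 := rfl

lemma eq_single_of_add_eq {i : Fin ℓ} {u v β : Fin ℓ →₀ ℕ} (h : u + v = β)
    (hβ : β = Finsupp.single i (β i)) : u = Finsupp.single i (u i) := by
  ext j
  by_cases hj : j = i
  · subst hj; simp
  · have hβj : β j = 0 := by
      conv_lhs => rw [hβ]
      exact Finsupp.single_eq_of_ne' fun hh => hj hh.symm
    have h2 : u j + v j = 0 := by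
      have := DFunLike.congr_fun h j
      rw [Finsupp.add_apply] at this
      rw [this, hβj]
    rw [Finsupp.single_apply, if_neg (fun hh => hj hh.symm)]
    omega

lemma oneVar_one (i : Fin ℓ) : oneVar i 1 = 1 := by
  apply MvPowerSeries.ext; intro β
  rw [coeff_oneVar, MvPowerSeries.coeff_one]
  by_cases hβ : β = 0
  · subst hβ; simp
  · rw [if_neg hβ]
    split_ifs with h1
    · rw [PowerSeries.coeff_one,
        if_neg (fun h0 => hβ (by rw [h1, h0, Finsupp.single_zero]))]
    · rfl

lemma oneVar_mul (i : Fin ℓ) (f g : PowerSeries R) :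
    oneVar i (f * g) = oneVar i f * oneVar i g := by
  apply MvPowerSeries.ext; intro β
  rw [coeff_oneVar, MvPowerSeries.coeff_mul]
  by_cases hβ : β = Finsupp.single i (β i)
  · rw [if_pos hβ, PowerSeries.coeff_mul]
    refine (Finset.sum_nbij' (fun p => (p.1 i, p.2 i))
      (fun q => (Finsupp.single i q.1, Finsupp.single i q.2)) ?_ ?_ ?_ ?_ ?_).symm
    · rintro ⟨u, v⟩ hp
      rw [Finset.HasAntidiagonal.mem_antidiagonal] at hp ⊢
      have := DFunLike.congr_fun hp i
      rw [Finsupp.add_apply] at this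
      exact this
    · rintro ⟨a, b⟩ hq
      rw [Finset.HasAntidiagonal.mem_antidiagonal] at hq ⊢
      rw [← Finsupp.single_add, hq]
      exact hβ.symm
    · rintro ⟨u, v⟩ hp
      rw [Finset.HasAntidiagonal.mem_antidiagonal] at hp
      have h1 := eq_single_of_add_eq hp hβ
      have h2 := eq_single_of_add_eq (by rw [add_comm]; exact hp) hβ
      exact Prod.ext h1.symm h2.symm
    · rintro ⟨a, b⟩ _
      exact Prod.ext (Finsupp.single_eq_same) (Finsupp.single_eq_same)
    · rintro ⟨u, v⟩ hp
      rw [Finset.HasAntidiagonal.mem_antidiagonal] at hp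
      have h1 := eq_single_of_add_eq hp hβ
      have h2 := eq_single_of_add_eq (by rw [add_comm]; exact hp) hβ
      rw [coeff_oneVar, coeff_oneVar, if_pos h1, if_pos h2]
  · rw [if_neg hβ]
    symm
    refine Finset.sum_eq_zero fun p hp => ?_
    rw [Finset.HasAntidiagonal.mem_antidiagonal] at hp
    rw [coeff_oneVar, coeff_oneVar]
    by_cases c1 : p.1 = Finsupp.single i (p.1 i)
    · by_cases c2 : p.2 = Finsupp.single i (p.2 i)
      · exfalso
        apply hβ
        have hkey : β = Finsupp.single i (p.1 i + p.2 i) := by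
          rw [Finsupp.single_add, ← c1, ← c2]
          exact hp.symm
        have hβi : β i = p.1 i + p.2 i := by
          conv_lhs => rw [hkey]
          exact Finsupp.single_eq_same
        rw [hβi]
        exact hkey
      · rw [if_neg c2, mul_zero]
    · rw [if_neg c1, zero_mul]

lemma oneVar_pow (i : Fin ℓ) (f : PowerSeries R) (k : ℕ) :
    oneVar i (f ^ k) = (oneVar i f) ^ k := by
  induction k with
  | zero => rw [pow_zero, pow_zero]; exact oneVar_one i
  | succ k ih => rw [pow_succ, pow_succ, oneVar_mul, ih]

lemma constantCoeff_oneVar (i : Fin ℓ) {f : PowerSeries R}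
    (hf : PowerSeries.coeff 0 f = 0) : constantCoeff (oneVar i f) = 0 := by
  rw [← coeff_zero_eq_constantCoeff_apply, coeff_oneVar]
  simp [hf]

lemma constantCoeff_tser : PowerSeries.coeff 0 tser = 0 := by
  unfold tser
  rw [PowerSeries.coeff_mk, dif_neg (lt_irrefl 0)]

lemma Xi_eq_sum (ℓ : ℕ) : Xi ℓ = ∑ i : Fin ℓ, oneVar i tser := by
  apply MvPowerSeries.ext; intro α
  rw [map_sum, coeff_apply]
  show (if h : α.support.card = 1 ∧ 0 < (α.sum fun _ n => n)
    then tv ⟨α.sum fun _ n => n, h.2⟩ else 0) = _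
  by_cases h : α.support.card = 1 ∧ 0 < (α.sum fun _ n => n)
  · rw [dif_pos h]
    obtain ⟨i0, hi0⟩ := Finset.card_eq_one.mp h.1
    have hα : α = Finsupp.single i0 (α i0) :=
      Finsupp.support_subset_singleton.mp (by rw [hi0])
    have hne : α i0 ≠ 0 := by
      rw [← Finsupp.mem_support_iff, hi0]
      exact Finset.mem_singleton_self i0
    have hdeg : (α.sum fun _ n => n) = α i0 := by
      conv_lhs => rw [hα]
      exact Finsupp.sum_single_index rfl
    refine Eq.trans ?_ (Finset.sum_eq_single i0 ?_ ?_).symm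
    · rw [coeff_oneVar, if_pos hα]
      unfold tser
      rw [PowerSeries.coeff_mk, dif_pos (Nat.pos_of_ne_zero hne)]
      unfold tv
      congr 1
      exact Subtype.ext hdeg
    · intro b _ hb
      rw [coeff_oneVar, if_neg]
      intro hc
      have hb0 : α b = 0 := by
        rw [← Finsupp.notMem_support_iff, hi0]
        simp [hb]
      apply hne
      have : α = 0 := by rw [hc, hb0, Finsupp.single_zero]
      rw [this]; rfl
    · intro hmem; exact absurd (Finset.mem_univ i0) hmem
  · rw [dif_neg h]
    symm
    refine Finset.sum_eq_zero fun i _ => ?_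
    rw [coeff_oneVar]
    split_ifs with hc
    · by_cases hz : α i = 0
      · rw [hz]; exact constantCoeff_tser
      · exfalso
        apply h
        constructor
        · rw [hc, Finsupp.support_single_ne_zero _ hz]
          exact Finset.card_singleton i
        · have : (α.sum fun _ n => n) = α i := by
            conv_lhs => rw [hc]
            exact Finsupp.sum_single_index rfl
          rw [this]
          exact Nat.pos_of_ne_zero hz
    · rfl

lemma coeff_mvExp_oneVar (i : Fin ℓ) (β : Fin ℓ →₀ ℕ) :
    coeff β (mvExp (oneVar i tser))
      = if β = Finsupp.single i (β i) then hp (β i) else 0 := by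
  rw [coeff_mvExp]
  split_ifs with hβ
  · have hdeg : degHom (Fin ℓ) β = β i := by
      show (β.sum fun _ n => n) = β i
      conv_lhs => rw [hβ]
      exact Finsupp.sum_single_index rfl
    rw [hdeg]
    unfold hp psExp
    rw [PowerSeries.coeff_mk]
    refine Finset.sum_congr rfl fun k _ => ?_
    congr 1
    rw [← oneVar_pow, coeff_oneVar, if_pos hβ]
  · refine Finset.sum_eq_zero fun k _ => ?_
    rw [← oneVar_pow, coeff_oneVar, if_neg hβ, smul_zero]

lemma coeff_mvExp_Xi (ℓ : ℕ) (α : Fin ℓ →₀ ℕ) :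
    coeff α (mvExp (Xi ℓ)) = ∏ i, hp (α i) := by
  rw [Xi_eq_sum, mvExp_sum Finset.univ _
    (fun i _ => constantCoeff_oneVar i constantCoeff_tser), coeff_prod]
  set l0 : Fin ℓ →₀ (Fin ℓ →₀ ℕ) :=
    Finsupp.equivFunOnFinite.symm (fun i => Finsupp.single i (α i)) with hl0
  have hl0i : ∀ i, l0 i = Finsupp.single i (α i) := fun i => rfl
  have hl0mem : l0 ∈ Finset.finsuppAntidiag Finset.univ α := by
    rw [Finset.mem_finsuppAntidiag]
    refine ⟨?_, Finset.subset_univ _⟩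
    ext j
    rw [Finset.sum_apply']
    rw [Finset.sum_eq_single j (fun i _ hij => by rw [hl0i i]; exact Finsupp.single_eq_of_ne' hij)
      (fun hmem => absurd (Finset.mem_univ j) hmem)]
    rw [hl0i j]
    exact Finsupp.single_eq_same
  rw [Finset.sum_eq_single l0 ?_ ?_]
  · refine Finset.prod_congr rfl fun i _ => ?_
    rw [coeff_mvExp_oneVar, hl0i i, if_pos (by rw [Finsupp.single_eq_same]),
      Finsupp.single_eq_same]
  · intro l hl hne
    by_cases hall : ∀ i, l i = Finsupp.single i (l i i)
    · exfalso
      apply hne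
      have hsum := (Finset.mem_finsuppAntidiag.mp hl).1
      have hval : ∀ j, l j j = α j := by
        intro j
        have hj := DFunLike.congr_fun hsum j
        rw [Finset.sum_apply'] at hj
        rw [← hj]
        rw [Finset.sum_eq_single j (fun i _ hij => by
            conv_lhs => rw [hall i]
            exact Finsupp.single_eq_of_ne' hij)
          (fun hmem => absurd (Finset.mem_univ j) hmem)]
      ext i
      rw [hl0i i]
      conv_lhs => rw [hall i, hval i]
    · push_neg at hall
      obtain ⟨i, hi⟩ := hall
      refine Finset.prod_eq_zero (Finset.mem_univ i) ?_
      rw [coeff_mvExp_oneVar, if_neg hi]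
  · intro h; exact absurd hl0mem h

end OneVar


section MainComputation

open MvPowerSeries Finset Equiv

variable {ℓ : ℕ}

lemma vandPS_eq_det (ℓ : ℕ) :
    vandPS ℓ = Matrix.det (Matrix.of fun i j : Fin ℓ =>
      (MvPowerSeries.X i : MvPowerSeries (Fin ℓ) R) ^ (j : ℕ)) := by
  have h := Matrix.det_vandermonde (fun i : Fin ℓ => (MvPowerSeries.X i : MvPowerSeries (Fin ℓ) R))
  rw [show (Matrix.of fun i j : Fin ℓ => (MvPowerSeries.X i : MvPowerSeries (Fin ℓ) R) ^ (j : ℕ))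
      = Matrix.vandermonde (fun i : Fin ℓ => (MvPowerSeries.X i : MvPowerSeries (Fin ℓ) R))
      from rfl, h]
  unfold vandPS
  rw [Finset.prod_sigma']
  refine Finset.prod_nbij' (fun p => ⟨p.1, p.2⟩) (fun q => (q.1, q.2)) ?_ ?_ ?_ ?_ ?_
  · rintro ⟨a, b⟩ hp
    simp only [Finset.mem_filter, Finset.mem_univ, true_and] at hp
    simp only [Finset.mem_sigma, Finset.mem_univ, true_and, Finset.mem_Ioi]
    exact hp
  · rintro ⟨a, b⟩ hq
    simp only [Finset.mem_sigma, Finset.mem_univ, true_and, Finset.mem_Ioi] at hq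
    simp only [Finset.mem_filter, Finset.mem_univ, true_and]
    exact hq
  · rintro ⟨a, b⟩ _; rfl
  · rintro ⟨a, b⟩ _; rfl
  · rintro ⟨a, b⟩ _; rfl

lemma prod_monomial {ι : Type} (s : Finset ι) (e : ι → (Fin ℓ →₀ ℕ)) :
    (∏ i ∈ s, MvPowerSeries.monomial (e i) (1:R))
      = MvPowerSeries.monomial (∑ i ∈ s, e i) 1 := by
  classical
  induction s using Finset.induction_on with
  | empty => rw [Finset.prod_empty, Finset.sum_empty, MvPowerSeries.monomial_zero_one]
  | @insert j s hj ih =>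
      rw [Finset.prod_insert hj, Finset.sum_insert hj, ih,
        MvPowerSeries.monomial_mul_monomial, one_mul]

/-- the exponent `Σ_i single (σ i) i`, so that `∏ X_{σ i}^i = z^{permDeg σ}` -/
def permDeg (σp : Equiv.Perm (Fin ℓ)) : Fin ℓ →₀ ℕ :=
  ∑ i : Fin ℓ, Finsupp.single (σp i) (i : ℕ)

lemma permDeg_apply (σp : Equiv.Perm (Fin ℓ)) (j : Fin ℓ) :
    permDeg σp j = ((σp⁻¹ j : Fin ℓ) : ℕ) := by
  unfold permDeg
  rw [Finset.sum_apply']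
  rw [Finset.sum_eq_single (σp⁻¹ j) (fun i _ hne => Finsupp.single_eq_of_ne' (fun hh =>
      hne (by rw [← hh, Equiv.Perm.inv_def, Equiv.symm_apply_apply])))
    (fun hmem => absurd (Finset.mem_univ _) hmem)]
  rw [Equiv.Perm.inv_def, Equiv.apply_symm_apply]
  exact Finsupp.single_eq_same

lemma prod_X_pow_perm (σp : Equiv.Perm (Fin ℓ)) :
    (∏ i : Fin ℓ, (MvPowerSeries.X (σp i) : MvPowerSeries (Fin ℓ) R) ^ (i : ℕ))
      = MvPowerSeries.monomial (permDeg σp) 1 := by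
  rw [Finset.prod_congr rfl fun i _ => MvPowerSeries.X_pow_eq (σp i) (i : ℕ)]
  exact prod_monomial _ _

lemma coeff_intCast_mul (z : ℤ) (F : MvPowerSeries (Fin ℓ) R) (d : Fin ℓ →₀ ℕ) :
    coeff d ((z : MvPowerSeries (Fin ℓ) R) * F) = (z : R) * coeff d F := by
  rw [← zsmul_eq_mul, map_zsmul, zsmul_eq_mul]

lemma coeff_shift (m : ℕ) (d : Fin ℓ →₀ ℕ) :
    (if d ≤ Finsupp.equivFunOnFinite.symm (fun _ : Fin ℓ => 2*m)
      then coeff ((Finsupp.equivFunOnFinite.symm fun _ : Fin ℓ => 2*m) - d) (mvExp (Xi ℓ))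
      else 0)
      = ∏ i : Fin ℓ, hz ((2*m : ℤ) - (d i : ℕ)) := by
  have hαm : ∀ i : Fin ℓ, (Finsupp.equivFunOnFinite.symm fun _ : Fin ℓ => 2*m) i = 2*m :=
    fun i => rfl
  split_ifs with h
  · rw [coeff_mvExp_Xi]
    refine Finset.prod_congr rfl fun i _ => ?_
    have hd : d i ≤ 2*m := by
      have := (Finsupp.le_def.mp h) i
      rwa [hαm] at this
    have hsub : ((Finsupp.equivFunOnFinite.symm fun _ : Fin ℓ => 2*m) - d) i = 2*m - d i := by
      rw [Finsupp.tsub_apply, hαm]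
    rw [hsub]
    unfold hz
    rw [if_neg (by omega : ¬ ((2*m:ℤ) - (d i : ℕ) < 0))]
    congr 1
    omega
  · symm
    have h' : ¬ ∀ i, d i ≤ (Finsupp.equivFunOnFinite.symm fun _ : Fin ℓ => 2*m) i :=
      fun hh => h (Finsupp.le_def.mpr hh)
    push_neg at h'
    obtain ⟨i, hi⟩ := h'
    rw [hαm] at hi
    refine Finset.prod_eq_zero (Finset.mem_univ i) ?_
    unfold hz
    rw [if_pos (by omega : ((2*m:ℤ) - (d i : ℕ) < 0))]

lemma B_eq_detN (m : ℕ) :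
    (∑ πp : Equiv.Perm (Fin ℓ), ((Equiv.Perm.sign πp : ℤ) : R) *
        ∏ j : Fin ℓ, hz ((2*m:ℤ) - (j:ℕ) - ((πp j : Fin ℓ):ℕ)))
      = Matrix.det (Matrix.of fun i j : Fin ℓ => hz ((2*m:ℤ) - (i:ℕ) - (j:ℕ))) := by
  rw [Matrix.det_apply']
  rw [← Equiv.sum_comp (Equiv.inv (Equiv.Perm (Fin ℓ)))
    (fun πp => ((Equiv.Perm.sign πp : ℤ) : R) *
      ∏ i : Fin ℓ, (Matrix.of fun i j : Fin ℓ => hz ((2*m:ℤ) - (i:ℕ) - (j:ℕ))) (πp i) i)]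
  refine Finset.sum_congr rfl fun πp _ => ?_
  simp only [Equiv.inv_apply, Matrix.of_apply]
  rw [Equiv.Perm.sign_inv]
  congr 1
  rw [← Equiv.prod_comp πp (fun i => hz ((2*m:ℤ) - ((πp⁻¹ i : Fin ℓ):ℕ) - (i:ℕ)))]
  refine Finset.prod_congr rfl fun j _ => ?_
  rw [Equiv.Perm.inv_def, Equiv.symm_apply_apply]

lemma detN_eq (m : ℕ) (h2 : ℓ ≤ 2*m+1) :
    Matrix.det (Matrix.of fun i j : Fin ℓ => hz ((2*m:ℤ) - (i:ℕ) - (j:ℕ)))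
      = (-1 : R)^(ℓ*(ℓ-1)/2) * SchurS (List.replicate ℓ (2*m+1-ℓ)) := by
  have hstep1 : (Matrix.of fun i j : Fin ℓ => hz ((2*m:ℤ) - (i:ℕ) - (j:ℕ)))
      = (Matrix.of fun i j : Fin ℓ =>
          hz (((2*m+1-ℓ : ℕ) : ℤ) - (i:ℕ) + (j:ℕ))).submatrix id Fin.revPerm := by
    ext i j
    simp only [Matrix.submatrix_apply, Matrix.of_apply, id_eq, Fin.revPerm_apply]
    congr 1
    have hj := j.isLt
    have hi := i.isLt
    rw [Fin.val_rev]
    push_cast [Nat.cast_sub (by omega : ℓ ≤ 2*m+1), Nat.cast_sub (by omega : j.val + 1 ≤ ℓ)]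
    ring
  rw [hstep1, Matrix.det_permute', sign_revPerm]
  congr 1
  · push_cast
    ring
  · -- det Smat = SchurS
    unfold SchurS
    have hlen : (List.replicate ℓ (2*m+1-ℓ)).length = ℓ := List.length_replicate
    have := Matrix.det_submatrix_equiv_self (finCongr hlen.symm)
      (Matrix.of fun i j : Fin (List.replicate ℓ (2*m+1-ℓ)).length =>
        hz ((((List.replicate ℓ (2*m+1-ℓ)).get i : ℕ) : ℤ) - (i : ℕ) + (j : ℕ)))
    rw [← this]
    congr 1
    ext i j
    simp only [Matrix.submatrix_apply, Matrix.of_apply, finCongr_apply]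
    rw [List.get_eq_getElem, List.getElem_replicate, Fin.coe_cast, Fin.coe_cast]

end MainComputation

/-- The coefficient of `z_1^{2m} ⋯ z_ℓ^{2m}` in `Δ(z)² · exp(Σ_j Σ_n t_n z_j^n)`
is `(-1)^{ℓ(ℓ-1)/2} · ℓ! · S_{□(ℓ, 2m+1-ℓ)}(t)`. -/
theorem vertex_coeff_f0 (m ℓ : ℕ) (h1 : 1 ≤ ℓ) (h2 : ℓ ≤ 2 * m + 1) :
    MvPowerSeries.coeff (Finsupp.equivFunOnFinite.symm fun _ : Fin ℓ => 2 * m)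
        (vandPS ℓ ^ 2 * mvExp (Xi ℓ)) =
      (-1 : R) ^ (ℓ * (ℓ - 1) / 2) * (Nat.factorial ℓ : R) *
        SchurS (List.replicate ℓ (2 * m + 1 - ℓ)) := by
  classical
  have hdval : ∀ (σp τp : Equiv.Perm (Fin ℓ)) (i : Fin ℓ),
      ((permDeg σp + permDeg τp) i : ℕ)
        = ((σp⁻¹ i : Fin ℓ) : ℕ) + ((τp⁻¹ i : Fin ℓ) : ℕ) := fun σp τp i => by
    rw [Finsupp.add_apply, permDeg_apply, permDeg_apply]
  -- Step 1 : expand the squared Vandermonde determinant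
  have expand : vandPS ℓ ^ 2 * mvExp (Xi ℓ)
      = ∑ σp : Equiv.Perm (Fin ℓ), ∑ τp : Equiv.Perm (Fin ℓ),
          ((Equiv.Perm.sign σp : ℤ) : MvPowerSeries (Fin ℓ) R) *
            (((Equiv.Perm.sign τp : ℤ) : MvPowerSeries (Fin ℓ) R) *
              (MvPowerSeries.monomial (permDeg σp + permDeg τp) 1 * mvExp (Xi ℓ))) := by
    rw [pow_two, vandPS_eq_det, Matrix.det_apply', Finset.sum_mul, Finset.sum_mul]
    refine Finset.sum_congr rfl fun σp _ => ?_
    rw [Finset.mul_sum, Finset.sum_mul]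
    refine Finset.sum_congr rfl fun τp _ => ?_
    simp only [Matrix.of_apply]
    rw [prod_X_pow_perm, prod_X_pow_perm]
    conv_rhs => rw [show (1:R) = (1:R) * 1 from (mul_one 1).symm,
      ← MvPowerSeries.monomial_mul_monomial]
    ring
  -- Step 2 : extract the coefficient
  have main1 : MvPowerSeries.coeff (Finsupp.equivFunOnFinite.symm fun _ : Fin ℓ => 2 * m)
        (vandPS ℓ ^ 2 * mvExp (Xi ℓ))
      = ∑ σp : Equiv.Perm (Fin ℓ), ∑ τp : Equiv.Perm (Fin ℓ),
          ((Equiv.Perm.sign σp : ℤ) : R) * (((Equiv.Perm.sign τp : ℤ) : R) *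
            ∏ i : Fin ℓ, hz ((2*m : ℤ) - ((σp⁻¹ i : Fin ℓ) : ℕ) - ((τp⁻¹ i : Fin ℓ) : ℕ))) := by
    rw [expand, map_sum]
    refine Finset.sum_congr rfl fun σp _ => ?_
    rw [map_sum]
    refine Finset.sum_congr rfl fun τp _ => ?_
    rw [coeff_intCast_mul, coeff_intCast_mul, MvPowerSeries.coeff_monomial_mul]
    simp only [one_mul]
    refine congrArg _ (congrArg _ ?_)
    rw [coeff_shift m]
    refine Finset.prod_congr rfl fun i _ => ?_
    rw [hdval]
    congr 1
    push_cast
    ring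
  rw [main1]
  -- Step 3 : replace σ, τ by their inverses
  have main3 : (∑ σp : Equiv.Perm (Fin ℓ), ∑ τp : Equiv.Perm (Fin ℓ),
        ((Equiv.Perm.sign σp : ℤ) : R) * (((Equiv.Perm.sign τp : ℤ) : R) *
          ∏ i : Fin ℓ, hz ((2*m : ℤ) - ((σp⁻¹ i : Fin ℓ) : ℕ) - ((τp⁻¹ i : Fin ℓ) : ℕ))))
      = ∑ σp : Equiv.Perm (Fin ℓ), ∑ τp : Equiv.Perm (Fin ℓ),
          ((Equiv.Perm.sign σp : ℤ) : R) * (((Equiv.Perm.sign τp : ℤ) : R) *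
            ∏ i : Fin ℓ, hz ((2*m : ℤ) - ((σp i : Fin ℓ) : ℕ) - ((τp i : Fin ℓ) : ℕ))) := by
    refine Fintype.sum_bijective (fun σp : Equiv.Perm (Fin ℓ) => σp⁻¹)
      (Equiv.inv (Equiv.Perm (Fin ℓ))).bijective _ _ fun σp => ?_
    refine Fintype.sum_bijective (fun τp : Equiv.Perm (Fin ℓ) => τp⁻¹)
      (Equiv.inv (Equiv.Perm (Fin ℓ))).bijective _ _ fun τp => ?_
    simp [Equiv.Perm.sign_inv]
  rw [main3]
  -- Step 4 : substitute τ = π σ and evaluate the inner sum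
  have hsq : ∀ σp : Equiv.Perm (Fin ℓ),
      ((Equiv.Perm.sign σp : ℤ) : R) * ((Equiv.Perm.sign σp : ℤ) : R) = 1 := fun σp => by
    rw [← Int.cast_mul, ← Units.val_mul, Int.units_mul_self, Units.val_one, Int.cast_one]
  have main4 : ∀ σp : Equiv.Perm (Fin ℓ),
      (∑ τp : Equiv.Perm (Fin ℓ), ((Equiv.Perm.sign σp : ℤ) : R) *
          (((Equiv.Perm.sign τp : ℤ) : R) *
            ∏ i : Fin ℓ, hz ((2*m : ℤ) - ((σp i : Fin ℓ) : ℕ) - ((τp i : Fin ℓ) : ℕ))))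
        = ∑ πp : Equiv.Perm (Fin ℓ), ((Equiv.Perm.sign πp : ℤ) : R) *
            ∏ j : Fin ℓ, hz ((2*m : ℤ) - (j : ℕ) - ((πp j : Fin ℓ) : ℕ)) := by
    intro σp
    rw [← Equiv.sum_comp (Equiv.mulRight σp)
      (fun τp : Equiv.Perm (Fin ℓ) => ((Equiv.Perm.sign σp : ℤ) : R) *
        (((Equiv.Perm.sign τp : ℤ) : R) *
          ∏ i : Fin ℓ, hz ((2*m : ℤ) - ((σp i : Fin ℓ) : ℕ) - ((τp i : Fin ℓ) : ℕ))))]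
    refine Finset.sum_congr rfl fun πp _ => ?_
    simp only [Equiv.coe_mulRight, Equiv.Perm.mul_apply]
    have hprod : (∏ i : Fin ℓ, hz ((2*m : ℤ) - ((σp i : Fin ℓ) : ℕ) - ((πp (σp i) : Fin ℓ) : ℕ)))
        = ∏ j : Fin ℓ, hz ((2*m : ℤ) - (j : ℕ) - ((πp j : Fin ℓ) : ℕ)) :=
      Equiv.prod_comp σp (fun j => hz ((2*m : ℤ) - (j : ℕ) - ((πp j : Fin ℓ) : ℕ)))
    rw [hprod, Equiv.Perm.sign_mul, Units.val_mul, Int.cast_mul]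
    linear_combination (((Equiv.Perm.sign πp : ℤ) : R) *
      ∏ j : Fin ℓ, hz ((2*m : ℤ) - (j : ℕ) - ((πp j : Fin ℓ) : ℕ))) * hsq σp
  rw [Finset.sum_congr rfl fun σp _ => main4 σp, Finset.sum_const, Finset.card_univ,
    Fintype.card_perm, Fintype.card_fin, B_eq_detN m, detN_eq m h2, nsmul_eq_mul]
  ring

end Rect
end
end

section
/- Let m > 0 be an integer, ℓ ≥ 0, and let λ ∈ I_1^ℓ(c_m). Then λ has exactly m parts, and for each 1 ≤ j ≤ m the difference r_j = λ_j − (c_m)_j lies in {0,1,2}; moreover, with ε_m = 1 if m is odd and ε_m = 0 if m is even, and a(λ) = #{j : 1 ≤ j ≤ m, λ_j is even} + ε_m, one has r_1! · r_2! ⋯ r_m! = 2^{(ℓ − a(λ) + ε_m)/2}. -/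
noncomputable section

namespace Rect

lemma sum_eq_range (l : List ℕ) : l.sum = ∑ j ∈ Finset.range l.length, l.getD j 0 := by
  induction l with
  | nil => simp
  | cons a t ih =>
    rw [List.sum_cons, List.length_cons, Finset.sum_range_succ', ih]
    simp [List.getD_cons_succ, List.getD_cons_zero, Nat.add_comm]

lemma countP_eq_range (p : ℕ → Bool) (l : List ℕ) :
    l.countP p = ∑ j ∈ Finset.range l.length, if p (l.getD j 0) then 1 else 0 := by
  induction l with
  | nil => simp
  | cons a t ih =>
    rw [List.countP_cons, List.length_cons, Finset.sum_range_succ', ih]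
    simp [List.getD_cons_succ, List.getD_cons_zero]

/-- For `m > 0` and `λ ∈ I_1^ℓ(c_m)`: `λ` has exactly `m` parts, each difference
`r_j = λ_j - (c_m)_j` lies in `{0,1,2}`, and with
`a(λ) = #{j ≤ m : λ_j even} + ε_m` one has `r_1! ⋯ r_m! = 2^{(ℓ - a(λ) + ε_m)/2}`
(in particular `ℓ - a(λ) + ε_m` is a nonnegative even integer `2e`). -/
theorem factorial_product_one (m ℓ : ℕ) (hm : 0 < m) (lam : List ℕ)
    (h : lam ∈ ISet 1 ℓ (cBar (m : ℤ))) :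
    lam.length = m ∧
    (∀ j < m, lam.getD j 0 - (cBar (m : ℤ)).getD j 0 ∈ ({0, 1, 2} : Set ℕ)) ∧
    ∃ e : ℕ,
      2 * e + ((lam.countP fun x => x % 2 == 0) + epsN m) = ℓ + epsN m ∧
      (∏ j ∈ Finset.range m, Nat.factorial (lam.getD j 0 - (cBar (m : ℤ)).getD j 0)) = 2 ^ e := by
  obtain ⟨⟨hsort, hpos⟩, hle, hsum, hcol⟩ := h
  have hclen : (cBar (m : ℤ)).length = m := by
    simp [cBar]
  have hc : ∀ j, (cBar (m : ℤ)).getD j 0 = if j < m then 4 * (m - 1 - j) + 1 else 0 := by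
    intro j
    by_cases hj : j < m
    · rw [List.getD_eq_getElem _ _ (by omega : j < (cBar (m:ℤ)).length)]
      simp [cBar, hj]
    · rw [List.getD_eq_default _ _ (by omega)]
      simp [hj]
  have hmemlen : ∀ j, j < lam.length → 0 < lam.getD j 0 := by
    intro j hj
    rw [List.getD_eq_getElem _ _ hj]
    exact hpos _ (List.getElem_mem hj)
  have hlen : lam.length = m := by
    have h1 : m ≤ lam.length := by
      by_contra hlt
      push_neg at hlt
      have h2 := hle lam.length
      rw [List.getD_eq_default _ _ le_rfl, hc] at h2
      simp only [if_pos hlt] at h2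
      omega
    have h2 : lam.length ≤ m := by
      by_contra hlt
      push_neg at hlt
      have hp : 0 < lam.getD m 0 := hmemlen m hlt
      have h3 := hcol m 1 (by rw [hc]; simp) hp
      simp [nodeColor] at h3
    omega
  have hhi : ∀ j < m, lam.getD j 0 ≤ (cBar (m : ℤ)).getD j 0 + 2 := by
    intro j hj
    by_contra hgt
    push_neg at hgt
    have h3 := hcol j ((cBar (m : ℤ)).getD j 0 + 3) (by omega) (by omega)
    have h4 : ((cBar (m : ℤ)).getD j 0 + 3) % 4 = 0 := by
      rw [hc]; simp only [if_pos hj]; omega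
    simp only [nodeColor] at h3
    rw [if_pos (Or.inl h4)] at h3
    exact absurd h3 (by norm_num)
  set r : ℕ → ℕ := fun j => lam.getD j 0 - (cBar (m : ℤ)).getD j 0 with hrdef
  have hradd : ∀ j < m, lam.getD j 0 = (cBar (m : ℤ)).getD j 0 + r j := by
    intro j hj
    have := hle j
    simp only [hrdef]
    omega
  have hr2 : ∀ j < m, r j ≤ 2 := by
    intro j hj
    have := hhi j hj
    have := hle j
    simp only [hrdef]
    omega
  have hsumr : ℓ = ∑ j ∈ Finset.range m, r j := by
    have h1 := sum_eq_range lam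
    have h2 := sum_eq_range (cBar (m : ℤ))
    rw [hlen] at h1
    rw [hclen] at h2
    have h3 : ∑ j ∈ Finset.range m, lam.getD j 0 =
        ∑ j ∈ Finset.range m, ((cBar (m : ℤ)).getD j 0 + r j) :=
      Finset.sum_congr rfl fun j hj => hradd j (Finset.mem_range.mp hj)
    rw [Finset.sum_add_distrib] at h3
    omega
  have heven : ∀ j < m, ((lam.getD j 0 % 2 == 0) = true ↔ r j = 1) := by
    intro j hj
    have h1 := hradd j hj
    have h2 := hr2 j hj
    have h3 := hc j
    simp only [if_pos hj] at h3
    simp only [beq_iff_eq]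
    omega
  have hcount : (lam.countP fun x => x % 2 == 0) =
      ∑ j ∈ Finset.range m, if r j = 1 then 1 else 0 := by
    rw [countP_eq_range, hlen]
    refine Finset.sum_congr rfl fun j hj => ?_
    have := heven j (Finset.mem_range.mp hj)
    by_cases hr1 : r j = 1
    · rw [if_pos (this.mpr hr1), if_pos hr1]
    · rw [if_neg (fun hh => hr1 (this.mp hh)), if_neg hr1]
  refine ⟨hlen, fun j hj => by
    have := hr2 j hj
    simp only [hrdef] at this
    simp only [Set.mem_insert_iff, Set.mem_singleton_iff]
    omega, ?_⟩
  refine ⟨∑ j ∈ Finset.range m, if r j = 2 then 1 else 0, ?_, ?_⟩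
  · rw [hcount, hsumr, Finset.mul_sum]
    have key : (∑ i ∈ Finset.range m, 2 * if r i = 2 then 1 else 0) +
        (∑ j ∈ Finset.range m, if r j = 1 then 1 else 0) = ∑ j ∈ Finset.range m, r j := by
      rw [← Finset.sum_add_distrib]
      refine Finset.sum_congr rfl fun j hj => ?_
      have := hr2 j (Finset.mem_range.mp hj)
      split_ifs <;> omega
    omega
  · rw [← Finset.prod_pow_eq_pow_sum]
    refine Finset.prod_congr rfl fun j hj => ?_
    have h2 := hr2 j (Finset.mem_range.mp hj)
    have h3 : r j = 0 ∨ r j = 1 ∨ r j = 2 := by omega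
    show (r j).factorial = 2 ^ (if r j = 2 then 1 else 0)
    rcases h3 with h | h | h <;> rw [h] <;> rfl


end Rect
end
end
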